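/- arXiv:0903.0644 — 7 statements merged into one kernel-verified Lean document; each statement's English description precedes it below -/
import Mathlib

section
/- Suppose S_1, S_2 are polynomial solutions of the Lamé equation of the same degree k with Van Vleck parameters ν_1 < ν_2. Then between any two consecutive zeros of S_1 lying in the open interval (α_1, α_2), S_2 has a zero. -/
open Polynomial Set Filter Topology

set_option maxHeartbeats 1600000

private lemma sign_const' (f : ℝ → ℝ) (hf : Continuous f) (x1 x2 : ℝ)
    (h : ∀ t ∈ Ioo x1 x2, f t ≠ 0) :
    (∀ t ∈ Ioo x1 x2, 0 < f t) ∨ (∀ t ∈ Ioo x1 x2, f t < 0) := by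
  by_contra hc
  push_neg at hc
  obtain ⟨⟨s, hs, hs0⟩, ⟨u, hu, hu0⟩⟩ := hc
  have hsneg : f s < 0 := lt_of_le_of_ne hs0 (h s hs)
  have hupos : 0 < f u := lt_of_le_of_ne hu0 (Ne.symm (h u hu))
  rcases lt_trichotomy s u with hlt | heq | hgt
  · obtain ⟨t, ht, hft⟩ := intermediate_value_Ioo hlt.le hf.continuousOn ⟨hsneg, hupos⟩
    exact h t ⟨lt_trans hs.1 ht.1, lt_trans ht.2 hu.2⟩ hft
  · rw [heq] at hsneg; linarith
  · obtain ⟨t, ht, hft⟩ := intermediate_value_Ioo' hgt.le hf.continuousOn ⟨hsneg, hupos⟩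
    exact h t ⟨lt_trans hu.1 ht.1, lt_trans ht.2 hs.2⟩ hft

private lemma core' (a1 a2 a3 r1 r2 r3 μ ν1 ν2 : ℝ)
    (h12 : a1 < a2) (h23 : a2 < a3)
    (hr1 : 0 < r1) (hr2 : 0 < r2) (hr3 : 0 < r3)
    (hμ : 0 < μ) (hν : ν1 < ν2)
    (P Q : Polynomial ℝ)
    (hodeP : ((X - C a1) * (X - C a2) * (X - C a3)) * P.derivative.derivative
        + (C r1 * ((X - C a2) * (X - C a3)) + C r2 * ((X - C a1) * (X - C a3))
            + C r3 * ((X - C a1) * (X - C a2))) * P.derivative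
        = C μ * (X - C ν1) * P)
    (hodeQ : ((X - C a1) * (X - C a2) * (X - C a3)) * Q.derivative.derivative
        + (C r1 * ((X - C a2) * (X - C a3)) + C r2 * ((X - C a1) * (X - C a3))
            + C r3 * ((X - C a1) * (X - C a2))) * Q.derivative
        = C μ * (X - C ν2) * Q)
    (x1 x2 : ℝ) (hx1 : a1 < x1) (hx12 : x1 < x2) (hx2 : x2 < a2)
    (hz1 : P.eval x1 = 0) (hz2 : P.eval x2 = 0)
    (hP : ∀ t ∈ Ioo x1 x2, 0 < P.eval t)
    (hQ : ∀ t ∈ Ioo x1 x2, 0 < Q.eval t) : False := by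
  -- pointwise ODEs
  have odeP : ∀ t : ℝ,
      (t - a1) * (t - a2) * (t - a3) * P.derivative.derivative.eval t
        + (r1 * ((t - a2) * (t - a3)) + r2 * ((t - a1) * (t - a3))
            + r3 * ((t - a1) * (t - a2))) * P.derivative.eval t
      = μ * (t - ν1) * P.eval t := by
    intro t
    have h := congrArg (eval t) hodeP
    simp only [eval_mul, eval_add, eval_sub, eval_X, eval_C] at h
    linear_combination h
  have odeQ : ∀ t : ℝ,
      (t - a1) * (t - a2) * (t - a3) * Q.derivative.derivative.eval t
        + (r1 * ((t - a2) * (t - a3)) + r2 * ((t - a1) * (t - a3))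
            + r3 * ((t - a1) * (t - a2))) * Q.derivative.eval t
      = μ * (t - ν2) * Q.eval t := by
    intro t
    have h := congrArg (eval t) hodeQ
    simp only [eval_mul, eval_add, eval_sub, eval_X, eval_C] at h
    linear_combination h
  have hJ : ∀ t ∈ Icc x1 x2, t ∈ Ioo a1 a2 :=
    fun t ht => ⟨lt_of_lt_of_le hx1 ht.1, lt_of_le_of_lt ht.2 hx2⟩
  -- derivative of the weighted Wronskian
  have hF : ∀ x ∈ Ioo a1 a2, HasDerivAt
      (fun t => ((t - a1) ^ r1 * (a2 - t) ^ r2 * (a3 - t) ^ r3)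
        * (P.derivative.eval t * Q.eval t - P.eval t * Q.derivative.eval t))
      (((r1 * (x - a1) ^ (r1 - 1) * (a2 - x) ^ r2
            + (x - a1) ^ r1 * (-(r2 * (a2 - x) ^ (r2 - 1)))) * (a3 - x) ^ r3
          + (x - a1) ^ r1 * (a2 - x) ^ r2 * (-(r3 * (a3 - x) ^ (r3 - 1))))
        * (P.derivative.eval x * Q.eval x - P.eval x * Q.derivative.eval x)
        + ((x - a1) ^ r1 * (a2 - x) ^ r2 * (a3 - x) ^ r3)
          * (P.derivative.derivative.eval x * Q.eval x
              + P.derivative.eval x * Q.derivative.eval x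
              - (P.derivative.eval x * Q.derivative.eval x
                  + P.eval x * Q.derivative.derivative.eval x))) x := by
    intro x hx
    have hp1 : x - a1 ≠ 0 := ne_of_gt (by linarith [hx.1])
    have hp2 : a2 - x ≠ 0 := ne_of_gt (by linarith [hx.2])
    have hp3 : a3 - x ≠ 0 := ne_of_gt (by linarith [hx.2])
    have h1 : HasDerivAt (fun t => (t - a1) ^ r1) (r1 * (x - a1) ^ (r1 - 1)) x := by
      have := (Real.hasDerivAt_rpow_const (x := x - a1) (p := r1)
        (Or.inl hp1)).comp x ((hasDerivAt_id x).sub_const a1)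
      simpa [Function.comp_def] using this
    have h2 : HasDerivAt (fun t => (a2 - t) ^ r2) (-(r2 * (a2 - x) ^ (r2 - 1))) x := by
      have := (Real.hasDerivAt_rpow_const (x := a2 - x) (p := r2)
        (Or.inl hp2)).comp x ((hasDerivAt_const x a2).sub (hasDerivAt_id x))
      simpa [Function.comp_def] using this
    have h3 : HasDerivAt (fun t => (a3 - t) ^ r3) (-(r3 * (a3 - x) ^ (r3 - 1))) x := by
      have := (Real.hasDerivAt_rpow_const (x := a3 - x) (p := r3)
        (Or.inl hp3)).comp x ((hasDerivAt_const x a3).sub (hasDerivAt_id x))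
      simpa [Function.comp_def] using this
    have hW : HasDerivAt
        (fun t => P.derivative.eval t * Q.eval t - P.eval t * Q.derivative.eval t)
        (P.derivative.derivative.eval x * Q.eval x
            + P.derivative.eval x * Q.derivative.eval x
            - (P.derivative.eval x * Q.derivative.eval x
                + P.eval x * Q.derivative.derivative.eval x)) x :=
      ((P.derivative.hasDerivAt x).mul (Q.hasDerivAt x)).sub
        ((P.hasDerivAt x).mul (Q.derivative.hasDerivAt x))
    exact ((h1.mul h2).mul h3).mul hW
  -- key algebraic identity for the weight
  have hkey : ∀ x ∈ Ioo a1 a2,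
      ((r1 * (x - a1) ^ (r1 - 1) * (a2 - x) ^ r2
          + (x - a1) ^ r1 * (-(r2 * (a2 - x) ^ (r2 - 1)))) * (a3 - x) ^ r3
        + (x - a1) ^ r1 * (a2 - x) ^ r2 * (-(r3 * (a3 - x) ^ (r3 - 1))))
        * ((x - a1) * (x - a2) * (x - a3))
      = ((x - a1) ^ r1 * (a2 - x) ^ r2 * (a3 - x) ^ r3)
        * (r1 * ((x - a2) * (x - a3)) + r2 * ((x - a1) * (x - a3))
            + r3 * ((x - a1) * (x - a2))) := by
    intro x hx
    have hp1 : (0:ℝ) < x - a1 := by linarith [hx.1]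
    have hp2 : (0:ℝ) < a2 - x := by linarith [hx.2]
    have hp3 : (0:ℝ) < a3 - x := by linarith [hx.2]
    have e1 : (x - a1) ^ (r1 - 1) * (x - a1) = (x - a1) ^ r1 := by
      rw [← Real.rpow_add_one (ne_of_gt hp1) (r1 - 1)]; norm_num
    have e2 : (a2 - x) ^ (r2 - 1) * (a2 - x) = (a2 - x) ^ r2 := by
      rw [← Real.rpow_add_one (ne_of_gt hp2) (r2 - 1)]; norm_num
    have e3 : (a3 - x) ^ (r3 - 1) * (a3 - x) = (a3 - x) ^ r3 := by
      rw [← Real.rpow_add_one (ne_of_gt hp3) (r3 - 1)]; norm_num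
    set u' := (x - a1) ^ (r1 - 1)
    set v' := (a2 - x) ^ (r2 - 1)
    set z' := (a3 - x) ^ (r3 - 1)
    set u := (x - a1) ^ r1
    set v := (a2 - x) ^ r2
    set z := (a3 - x) ^ r3
    linear_combination (r1 * (v * z) * ((x - a2) * (x - a3))) * e1
      + (r2 * (u * z) * ((x - a1) * (x - a3))) * e2
      + (r3 * (u * v) * ((x - a1) * (x - a2))) * e3
  -- strict monotonicity of the weighted Wronskian
  have hmono : StrictMonoOn
      (fun t => ((t - a1) ^ r1 * (a2 - t) ^ r2 * (a3 - t) ^ r3)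
        * (P.derivative.eval t * Q.eval t - P.eval t * Q.derivative.eval t))
      (Icc x1 x2) := by
    apply strictMonoOn_of_deriv_pos (convex_Icc x1 x2)
    · intro t ht
      exact (hF t (hJ t ht)).continuousAt.continuousWithinAt
    · intro t ht
      rw [interior_Icc] at ht
      have htJ : t ∈ Ioo a1 a2 := hJ t (Ioo_subset_Icc_self ht)
      rw [(hF t htJ).deriv]
      have hk := hkey t htJ
      have oP := odeP t
      have oQ := odeQ t
      have hft : 0 < P.eval t := hP t ht
      have hgt : 0 < Q.eval t := hQ t ht
      have hp1 : (0:ℝ) < t - a1 := by linarith [htJ.1]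
      have hp2 : (0:ℝ) < a2 - t := by linarith [htJ.2]
      have hp3 : (0:ℝ) < a3 - t := by linarith [htJ.2]
      have hu : (0:ℝ) < (t - a1) ^ r1 := Real.rpow_pos_of_pos hp1 r1
      have hv : (0:ℝ) < (a2 - t) ^ r2 := Real.rpow_pos_of_pos hp2 r2
      have hz : (0:ℝ) < (a3 - t) ^ r3 := Real.rpow_pos_of_pos hp3 r3
      have hAv : (0:ℝ) < (t - a1) * (t - a2) * (t - a3) := by
        have h' : (t - a1) * (t - a2) * (t - a3)
            = (t - a1) * ((a2 - t) * (a3 - t)) := by ring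
        rw [h']
        exact mul_pos hp1 (mul_pos hp2 hp3)
      set u' := (t - a1) ^ (r1 - 1)
      set v' := (a2 - t) ^ (r2 - 1)
      set z' := (a3 - t) ^ (r3 - 1)
      set u := (t - a1) ^ r1
      set v := (a2 - t) ^ r2
      set z := (a3 - t) ^ r3
      set f0 := P.eval t
      set f1 := P.derivative.eval t
      set f2 := P.derivative.derivative.eval t
      set g0 := Q.eval t
      set g1 := Q.derivative.eval t
      set g2 := Q.derivative.derivative.eval t
      have hmain : ((t - a1) * (t - a2) * (t - a3))
          * (((r1 * u' * v + u * (-(r2 * v'))) * z + u * v * (-(r3 * z')))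
              * (f1 * g0 - f0 * g1)
            + u * v * z * (f2 * g0 + f1 * g1 - (f1 * g1 + f0 * g2)))
          = u * v * z * (μ * (ν2 - ν1) * (f0 * g0)) := by
        linear_combination (f1 * g0 - f0 * g1) * hk + (u * v * z * g0) * oP
          - (u * v * z * f0) * oQ
      have hrhs : (0:ℝ) < u * v * z * (μ * (ν2 - ν1) * (f0 * g0)) := by
        have := mul_pos (mul_pos hu hv) hz
        have h2 : (0:ℝ) < μ * (ν2 - ν1) * (f0 * g0) :=
          mul_pos (mul_pos hμ (by linarith)) (mul_pos hft hgt)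
        exact mul_pos this h2
      by_contra hb
      push_neg at hb
      nlinarith [hmain, hrhs, hAv, mul_nonpos_of_nonneg_of_nonpos hAv.le hb]
  -- endpoint facts
  have hx1J : x1 ∈ Ioo a1 a2 := ⟨hx1, lt_trans hx12 hx2⟩
  have hx2J : x2 ∈ Ioo a1 a2 := ⟨lt_trans hx1 hx12, hx2⟩
  have hw1 : (0:ℝ) < (x1 - a1) ^ r1 * (a2 - x1) ^ r2 * (a3 - x1) ^ r3 := by
    have h1 := Real.rpow_pos_of_pos (show (0:ℝ) < x1 - a1 by linarith [hx1J.1]) r1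
    have h2 := Real.rpow_pos_of_pos (show (0:ℝ) < a2 - x1 by linarith [hx1J.2]) r2
    have h3 := Real.rpow_pos_of_pos (show (0:ℝ) < a3 - x1 by linarith [hx1J.2]) r3
    exact mul_pos (mul_pos h1 h2) h3
  have hw2 : (0:ℝ) < (x2 - a1) ^ r1 * (a2 - x2) ^ r2 * (a3 - x2) ^ r3 := by
    have h1 := Real.rpow_pos_of_pos (show (0:ℝ) < x2 - a1 by linarith [hx2J.1]) r1
    have h2 := Real.rpow_pos_of_pos (show (0:ℝ) < a2 - x2 by linarith [hx2J.2]) r2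
    have h3 := Real.rpow_pos_of_pos (show (0:ℝ) < a3 - x2 by linarith [hx2J.2]) r3
    exact mul_pos (mul_pos h1 h2) h3
  have hd1 : 0 ≤ P.derivative.eval x1 := by
    have hder : HasDerivAt (fun t => P.eval t) (P.derivative.eval x1) x1 := P.hasDerivAt x1
    have htend : Tendsto (slope (fun t => P.eval t) x1) (𝓝[>] x1)
        (𝓝 (P.derivative.eval x1)) :=
      (hasDerivAt_iff_tendsto_slope.mp hder).mono_left
        (nhdsWithin_mono x1 (fun y hy => ne_of_gt hy))
    refine ge_of_tendsto htend ?_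
    filter_upwards [Ioo_mem_nhdsGT_of_mem (⟨le_refl x1, hx12⟩ : x1 ∈ Ico x1 x2)] with t ht
    rw [slope_def_field, hz1, sub_zero]
    exact div_nonneg (hP t ht).le (by linarith [ht.1])
  have hd2 : P.derivative.eval x2 ≤ 0 := by
    have hder : HasDerivAt (fun t => P.eval t) (P.derivative.eval x2) x2 := P.hasDerivAt x2
    have htend : Tendsto (slope (fun t => P.eval t) x2) (𝓝[<] x2)
        (𝓝 (P.derivative.eval x2)) :=
      (hasDerivAt_iff_tendsto_slope.mp hder).mono_left
        (nhdsWithin_mono x2 (fun y hy => ne_of_lt hy))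
    refine le_of_tendsto htend ?_
    filter_upwards [Ioo_mem_nhdsLT_of_mem (⟨hx12, le_refl x2⟩ : x2 ∈ Ioc x1 x2)] with t ht
    rw [slope_def_field, hz2, sub_zero]
    exact div_nonpos_of_nonneg_of_nonpos (hP t ht).le (by linarith [ht.2])
  have hg1 : 0 ≤ Q.eval x1 := by
    have htend : Tendsto (fun t => Q.eval t) (𝓝[>] x1) (𝓝 (Q.eval x1)) :=
      (Q.continuous.tendsto x1).mono_left nhdsWithin_le_nhds
    refine ge_of_tendsto htend ?_
    filter_upwards [Ioo_mem_nhdsGT_of_mem (⟨le_refl x1, hx12⟩ : x1 ∈ Ico x1 x2)] with t ht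
    exact (hQ t ht).le
  have hg2 : 0 ≤ Q.eval x2 := by
    have htend : Tendsto (fun t => Q.eval t) (𝓝[<] x2) (𝓝 (Q.eval x2)) :=
      (Q.continuous.tendsto x2).mono_left nhdsWithin_le_nhds
    refine ge_of_tendsto htend ?_
    filter_upwards [Ioo_mem_nhdsLT_of_mem (⟨hx12, le_refl x2⟩ : x2 ∈ Ioc x1 x2)] with t ht
    exact (hQ t ht).le
  -- conclusion
  have hlt := hmono (left_mem_Icc.mpr hx12.le) (right_mem_Icc.mpr hx12.le) hx12
  dsimp only at hlt
  rw [hz1, hz2] at hlt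
  have hA : 0 ≤ ((x1 - a1) ^ r1 * (a2 - x1) ^ r2 * (a3 - x1) ^ r3)
      * (P.derivative.eval x1 * Q.eval x1) :=
    mul_nonneg hw1.le (mul_nonneg hd1 hg1)
  have hB : 0 ≤ ((x2 - a1) ^ r1 * (a2 - x2) ^ r2 * (a3 - x2) ^ r3)
      * (-P.derivative.eval x2 * Q.eval x2) :=
    mul_nonneg hw2.le (mul_nonneg (neg_nonneg.mpr hd2) hg2)
  nlinarith [hlt, hA, hB]

/-- Sturm comparison: between two consecutive zeros of `S₁` in `(α₁, α₂)` there is a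
zero of `S₂`, when `S₁, S₂` are degree-`k` Stieltjes polynomials with Van Vleck
parameters `ν₁ < ν₂`. -/
theorem stmt_3 (a1 a2 a3 r1 r2 r3 μ ν1 ν2 : ℝ)
    (h12 : a1 < a2) (h23 : a2 < a3)
    (hr1 : 0 < r1) (hr2 : 0 < r2) (hr3 : 0 < r3)
    (k : ℕ) (hk : 1 ≤ k) (hμ : μ = (k : ℝ) * ((k : ℝ) - 1 + r1 + r2 + r3))
    (S1 S2 : Polynomial ℝ)
    (hd1 : S1.natDegree = k) (hd2 : S2.natDegree = k)
    (hode1 : ((X - C a1) * (X - C a2) * (X - C a3)) * S1.derivative.derivative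
        + (C r1 * ((X - C a2) * (X - C a3)) + C r2 * ((X - C a1) * (X - C a3))
            + C r3 * ((X - C a1) * (X - C a2))) * S1.derivative
        = C μ * (X - C ν1) * S1)
    (hode2 : ((X - C a1) * (X - C a2) * (X - C a3)) * S2.derivative.derivative
        + (C r1 * ((X - C a2) * (X - C a3)) + C r2 * ((X - C a1) * (X - C a3))
            + C r3 * ((X - C a1) * (X - C a2))) * S2.derivative
        = C μ * (X - C ν2) * S2)
    (hsimple1 : ∀ t : ℝ, S1.eval t = 0 → S1.derivative.eval t ≠ 0)
    (hsimple2 : ∀ t : ℝ, S2.eval t = 0 → S2.derivative.eval t ≠ 0)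
    (hloc1 : ∀ t : ℝ, S1.eval t = 0 → t ∈ Ioo a1 a3)
    (hloc2 : ∀ t : ℝ, S2.eval t = 0 → t ∈ Ioo a1 a3)
    (hν : ν1 < ν2)
    (x1 x2 : ℝ) (hx1 : a1 < x1) (hx12 : x1 < x2) (hx2 : x2 < a2)
    (hz1 : S1.eval x1 = 0) (hz2 : S1.eval x2 = 0)
    (hconsec : ∀ t ∈ Ioo x1 x2, S1.eval t ≠ 0) :
    ∃ y ∈ Ioo x1 x2, S2.eval y = 0 := by
  by_contra hcon
  push_neg at hcon
  have hμpos : 0 < μ := by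
    have hk1 : (1:ℝ) ≤ (k:ℝ) := by exact_mod_cast hk
    rw [hμ]; nlinarith
  have hode1' : ((X - C a1) * (X - C a2) * (X - C a3)) * (-S1).derivative.derivative
      + (C r1 * ((X - C a2) * (X - C a3)) + C r2 * ((X - C a1) * (X - C a3))
          + C r3 * ((X - C a1) * (X - C a2))) * (-S1).derivative
      = C μ * (X - C ν1) * (-S1) := by
    simp only [derivative_neg]
    linear_combination (-1 : Polynomial ℝ) * hode1
  have hode2' : ((X - C a1) * (X - C a2) * (X - C a3)) * (-S2).derivative.derivative
      + (C r1 * ((X - C a2) * (X - C a3)) + C r2 * ((X - C a1) * (X - C a3))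
          + C r3 * ((X - C a1) * (X - C a2))) * (-S2).derivative
      = C μ * (X - C ν2) * (-S2) := by
    simp only [derivative_neg]
    linear_combination (-1 : Polynomial ℝ) * hode2
  obtain h1p | h1n := sign_const' (fun t => S1.eval t) S1.continuous x1 x2 hconsec
  · obtain h2p | h2n := sign_const' (fun t => S2.eval t) S2.continuous x1 x2 hcon
    · exact core' a1 a2 a3 r1 r2 r3 μ ν1 ν2 h12 h23 hr1 hr2 hr3 hμpos hν S1 S2
        hode1 hode2 x1 x2 hx1 hx12 hx2 hz1 hz2 h1p h2p
    · exact core' a1 a2 a3 r1 r2 r3 μ ν1 ν2 h12 h23 hr1 hr2 hr3 hμpos hν S1 (-S2)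
        hode1 hode2' x1 x2 hx1 hx12 hx2 hz1 hz2 h1p
        (fun t ht => by simp only [eval_neg]; linarith [h2n t ht])
  · obtain h2p | h2n := sign_const' (fun t => S2.eval t) S2.continuous x1 x2 hcon
    · exact core' a1 a2 a3 r1 r2 r3 μ ν1 ν2 h12 h23 hr1 hr2 hr3 hμpos hν (-S1) S2
        hode1' hode2 x1 x2 hx1 hx12 hx2 (by simp [hz1]) (by simp [hz2])
        (fun t ht => by simp only [eval_neg]; linarith [h1n t ht]) h2p
    · exact core' a1 a2 a3 r1 r2 r3 μ ν1 ν2 h12 h23 hr1 hr2 hr3 hμpos hν (-S1) (-S2)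
        hode1' hode2' x1 x2 hx1 hx12 hx2 (by simp [hz1]) (by simp [hz2])
        (fun t ht => by simp only [eval_neg]; linarith [h1n t ht])
        (fun t ht => by simp only [eval_neg]; linarith [h2n t ht])
end

section
/- Suppose S_1, S_2 are polynomial solutions of the Lamé equation of degree k with Van Vleck parameters ν_1 < ν_2, and let x_1 be the smallest zero of S_1 in (α_1, α_2). Then S_2 has a zero in the open interval (α_1, x_1). -/
open Polynomial Set

set_option maxHeartbeats 2000000

private lemma stmt4_sign_const (f : Polynomial ℝ) (a b : ℝ)
    (h : ∀ t ∈ Set.Ioo a b, f.eval t ≠ 0) :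
    ∀ s ∈ Set.Ioo a b, ∀ t ∈ Set.Ioo a b, 0 < f.eval s * f.eval t := by
  have key : ∀ s ∈ Set.Ioo a b, ∀ t ∈ Set.Ioo a b, s ≤ t → 0 < f.eval s * f.eval t := by
    intro s hs t ht hst
    rcases lt_trichotomy (f.eval s * f.eval t) 0 with hneg | hz | hpos
    · exfalso
      have hsub : Set.Icc s t ⊆ Set.Ioo a b := fun u hu =>
        ⟨lt_of_lt_of_le hs.1 hu.1, lt_of_le_of_lt hu.2 ht.2⟩
      have hc : ContinuousOn (fun u => f.eval u) (Set.Icc s t) :=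
        (f.continuous_aeval).continuousOn
      rcases le_total (f.eval s) (f.eval t) with hle | hle
      · have h0 : (0:ℝ) ∈ Set.Icc (f.eval s) (f.eval t) :=
          ⟨by nlinarith, by nlinarith⟩
        obtain ⟨u, hu, hu0⟩ := intermediate_value_Icc hst hc h0
        exact h u (hsub hu) hu0
      · have h0 : (0:ℝ) ∈ Set.Icc (f.eval t) (f.eval s) :=
          ⟨by nlinarith, by nlinarith⟩
        obtain ⟨u, hu, hu0⟩ := intermediate_value_Icc' hst hc h0
        exact h u (hsub hu) hu0
    · exfalso
      rcases mul_eq_zero.1 hz with h' | h'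
      · exact h s hs h'
      · exact h t ht h'
    · exact hpos
  intro s hs t ht
  rcases le_total s t with h' | h'
  · exact key s hs t ht h'
  · have := key t ht s hs h'
    nlinarith

/-- If `x₁` is the smallest zero of `S₁` in `(α₁, α₂)`, then `S₂` has a zero
in `(α₁, x₁)`, for Stieltjes polynomials of equal degree with `ν₁ < ν₂`. -/
theorem stmt_4 (a1 a2 a3 r1 r2 r3 μ ν1 ν2 : ℝ)
    (h12 : a1 < a2) (h23 : a2 < a3)
    (hr1 : 0 < r1) (hr2 : 0 < r2) (hr3 : 0 < r3)
    (k : ℕ) (hk : 1 ≤ k) (hμ : μ = (k : ℝ) * ((k : ℝ) - 1 + r1 + r2 + r3))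
    (S1 S2 : Polynomial ℝ)
    (hd1 : S1.natDegree = k) (hd2 : S2.natDegree = k)
    (hode1 : ((X - C a1) * (X - C a2) * (X - C a3)) * S1.derivative.derivative
        + (C r1 * ((X - C a2) * (X - C a3)) + C r2 * ((X - C a1) * (X - C a3))
            + C r3 * ((X - C a1) * (X - C a2))) * S1.derivative
        = C μ * (X - C ν1) * S1)
    (hode2 : ((X - C a1) * (X - C a2) * (X - C a3)) * S2.derivative.derivative
        + (C r1 * ((X - C a2) * (X - C a3)) + C r2 * ((X - C a1) * (X - C a3))
            + C r3 * ((X - C a1) * (X - C a2))) * S2.derivative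
        = C μ * (X - C ν2) * S2)
    (hsimple1 : ∀ t : ℝ, S1.eval t = 0 → S1.derivative.eval t ≠ 0)
    (hsimple2 : ∀ t : ℝ, S2.eval t = 0 → S2.derivative.eval t ≠ 0)
    (hloc1 : ∀ t : ℝ, S1.eval t = 0 → t ∈ Ioo a1 a3)
    (hloc2 : ∀ t : ℝ, S2.eval t = 0 → t ∈ Ioo a1 a3)
    (hν : ν1 < ν2)
    (x1 : ℝ) (hx1 : x1 ∈ Ioo a1 a2) (hz1 : S1.eval x1 = 0)
    (hsmallest : ∀ t ∈ Ioo a1 x1, S1.eval t ≠ 0) :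
    ∃ y ∈ Ioo a1 x1, S2.eval y = 0 := by
  by_contra hcon
  push_neg at hcon
  obtain ⟨ha1x1, hx1a2⟩ := hx1
  have hx1a3 : x1 < a3 := hx1a2.trans h23
  have hμpos : 0 < μ := by
    have hk1 : (1:ℝ) ≤ (k:ℝ) := by exact_mod_cast hk
    nlinarith
  -- pointwise ODEs
  have ode1 : ∀ x : ℝ,
      (x-a1)*(x-a2)*(x-a3) * eval x (derivative (derivative S1))
      + (r1*((x-a2)*(x-a3)) + r2*((x-a1)*(x-a3)) + r3*((x-a1)*(x-a2)))
          * eval x (derivative S1)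
      = μ * (x - ν1) * eval x S1 := by
    intro x
    have h := congrArg (eval x) hode1
    simp only [eval_add, eval_mul, eval_sub, eval_X, eval_C] at h
    linear_combination h
  have ode2 : ∀ x : ℝ,
      (x-a1)*(x-a2)*(x-a3) * eval x (derivative (derivative S2))
      + (r1*((x-a2)*(x-a3)) + r2*((x-a1)*(x-a3)) + r3*((x-a1)*(x-a2)))
          * eval x (derivative S2)
      = μ * (x - ν2) * eval x S2 := by
    intro x
    have h := congrArg (eval x) hode2
    simp only [eval_add, eval_mul, eval_sub, eval_X, eval_C] at h
    linear_combination h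
  -- signs of S1, S2 on (a1, x1)
  set t0 : ℝ := (a1 + x1)/2 with ht0def
  have ht0 : t0 ∈ Ioo a1 x1 := ⟨by simp only [ht0def]; linarith, by simp only [ht0def]; linarith⟩
  set s1 : ℝ := if 0 < eval t0 S1 then 1 else -1 with hs1def
  set s2 : ℝ := if 0 < eval t0 S2 then 1 else -1 with hs2def
  have hsign1 : ∀ t ∈ Ioo a1 x1, 0 < s1 * eval t S1 := by
    intro t ht
    have hp := stmt4_sign_const S1 a1 x1 hsmallest t0 ht0 t ht
    rw [hs1def]
    split
    · rename_i hpos; nlinarith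
    · rename_i hneg
      have h0 : eval t0 S1 ≠ 0 := hsmallest t0 ht0
      have : eval t0 S1 < 0 := lt_of_le_of_ne (not_lt.mp hneg) h0
      nlinarith
  have hsign2 : ∀ t ∈ Ioo a1 x1, 0 < s2 * eval t S2 := by
    intro t ht
    have hp := stmt4_sign_const S2 a1 x1 hcon t0 ht0 t ht
    rw [hs2def]
    split
    · rename_i hpos; nlinarith
    · rename_i hneg
      have h0 : eval t0 S2 ≠ 0 := hcon t0 ht0
      have : eval t0 S2 < 0 := lt_of_le_of_ne (not_lt.mp hneg) h0
      nlinarith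
  -- the integrating factor and the Wronskian-type function
  set J : ℝ → ℝ := fun x => (x - a1) ^ r1 * ((a2 - x) ^ r2 * (a3 - x) ^ r3) with hJdef
  set W : ℝ → ℝ := fun x => (s1*s2) *
      (J x * (eval x (derivative S1) * eval x S2 - eval x S1 * eval x (derivative S2)))
      with hWdef
  have hJpos : ∀ x, a1 < x → x < a2 → 0 < J x := by
    intro x hx1' hx2'
    have h3' : x < a3 := hx2'.trans h23
    exact mul_pos (Real.rpow_pos_of_pos (by linarith) r1)
      (mul_pos (Real.rpow_pos_of_pos (by linarith) r2)
        (Real.rpow_pos_of_pos (by linarith) r3))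
  -- derivative of W on (a1, x1)
  have hWd : ∀ x ∈ Ioo a1 x1, HasDerivAt W
      ((s1*s2) * (J x * ((μ * (ν2 - ν1) * eval x S1 * eval x S2)
        / ((x-a1)*((x-a2)*(x-a3)))))) x := by
    intro x hx
    have hxa1 : a1 < x := hx.1
    have hxa2 : x < a2 := hx.2.trans hx1a2
    have hxa3 : x < a3 := hxa2.trans h23
    have h1ne : x - a1 ≠ 0 := ne_of_gt (by linarith)
    have h2ne : a2 - x ≠ 0 := ne_of_gt (by linarith)
    have h3ne : a3 - x ≠ 0 := ne_of_gt (by linarith)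
    have h2ne' : x - a2 ≠ 0 := ne_of_lt (by linarith)
    have h3ne' : x - a3 ≠ 0 := ne_of_lt (by linarith)
    -- derivative of J
    have hJd : HasDerivAt J (J x * (r1/(x-a1) + r2/(x-a2) + r3/(x-a3))) x := by
      have h1 : HasDerivAt (fun y : ℝ => (y - a1) ^ r1) (1 * r1 * (x - a1) ^ (r1-1)) x :=
        ((hasDerivAt_id x).sub_const a1).rpow_const (Or.inl h1ne)
      have h2 : HasDerivAt (fun y : ℝ => (a2 - y) ^ r2) ((0-1) * r2 * (a2 - x) ^ (r2-1)) x :=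
        ((hasDerivAt_const x a2).sub (hasDerivAt_id x)).rpow_const (Or.inl h2ne)
      have h3 : HasDerivAt (fun y : ℝ => (a3 - y) ^ r3) ((0-1) * r3 * (a3 - x) ^ (r3-1)) x :=
        ((hasDerivAt_const x a3).sub (hasDerivAt_id x)).rpow_const (Or.inl h3ne)
      have h := h1.mul (h2.mul h3)
      convert h using 1
      case e'_4 => rfl
      case e'_5 => rfl
      case e'_8 => rfl
      rw [Real.rpow_sub_one h1ne, Real.rpow_sub_one h2ne, Real.rpow_sub_one h3ne]
      simp only [hJdef, Pi.mul_apply]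
      field_simp
      ring
    -- derivative of the Wronskian
    have hg : HasDerivAt
        (fun y => eval y (derivative S1) * eval y S2 - eval y S1 * eval y (derivative S2))
        (eval x (derivative (derivative S1)) * eval x S2
          - eval x S1 * eval x (derivative (derivative S2))) x := by
      have h := ((S1.derivative.hasDerivAt x).mul (S2.hasDerivAt x)).sub
        ((S1.hasDerivAt x).mul (S2.derivative.hasDerivAt x))
      convert h using 1
      case e'_4 => rfl
      case e'_5 => rfl
      case e'_8 => rfl
      ring
    have key : ((x-a1)*((x-a2)*(x-a3))) *
        (eval x (derivative (derivative S1)) * eval x S2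
          - eval x S1 * eval x (derivative (derivative S2)))
        + (r1*((x-a2)*(x-a3)) + r2*((x-a1)*(x-a3)) + r3*((x-a1)*(x-a2)))
          * (eval x (derivative S1) * eval x S2 - eval x S1 * eval x (derivative S2))
        = μ * (ν2 - ν1) * eval x S1 * eval x S2 := by
      linear_combination eval x S2 * ode1 x - eval x S1 * ode2 x
    have hW1 := (hJd.mul hg).const_mul (s1*s2)
    rw [hWdef]
    convert hW1 using 1
    case e'_4 => rfl
    case e'_5 => rfl
    case e'_8 => rfl
    rw [← key]
    field_simp
    ring
  -- continuity of W on [a1, x1]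
  have hJc : ContinuousOn J (Icc a1 x1) := by
    apply ContinuousOn.mul
    · exact (continuousOn_id.sub continuousOn_const).rpow_const (fun x _ => Or.inr hr1.le)
    · apply ContinuousOn.mul
      · exact (continuousOn_const.sub continuousOn_id).rpow_const (fun x _ => Or.inr hr2.le)
      · exact (continuousOn_const.sub continuousOn_id).rpow_const (fun x _ => Or.inr hr3.le)
  have hWc : ContinuousOn W (Icc a1 x1) := by
    apply ContinuousOn.mul continuousOn_const
    apply hJc.mul
    exact ((S1.derivative.continuous_aeval.mul S2.continuous_aeval).sub
      (S1.continuous_aeval.mul S2.derivative.continuous_aeval)).continuousOn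
  -- W is strictly increasing on [a1, x1]
  have hmono : StrictMonoOn W (Icc a1 x1) := by
    apply strictMonoOn_of_deriv_pos (convex_Icc a1 x1) hWc
    intro x hx
    rw [interior_Icc] at hx
    rw [(hWd x hx).deriv]
    have hxa1 : a1 < x := hx.1
    have hxa2 : x < a2 := hx.2.trans hx1a2
    have hxa3 : x < a3 := hxa2.trans h23
    have hApos : (0:ℝ) < (x-a1)*((x-a2)*(x-a3)) :=
      mul_pos (by linarith) (mul_pos_of_neg_of_neg (by linarith) (by linarith))
    have hP : (0:ℝ) < μ * (ν2 - ν1) / ((x-a1)*((x-a2)*(x-a3))) :=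
      div_pos (mul_pos hμpos (by linarith)) hApos
    have hs12 : 0 < (s1 * eval x S1) * (s2 * eval x S2) :=
      mul_pos (hsign1 x hx) (hsign2 x hx)
    have heq : (s1*s2) * (J x * ((μ * (ν2 - ν1) * eval x S1 * eval x S2)
        / ((x-a1)*((x-a2)*(x-a3)))))
        = J x * (μ * (ν2 - ν1) / ((x-a1)*((x-a2)*(x-a3))))
          * ((s1 * eval x S1) * (s2 * eval x S2)) := by
      ring
    rw [heq]
    exact mul_pos (mul_pos (hJpos x hxa1 hxa2) hP) hs12
  -- W a1 = 0
  have hWa1 : W a1 = 0 := by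
    simp [hWdef, hJdef, Real.zero_rpow hr1.ne']
  have hWx1pos : 0 < W x1 := by
    have := hmono (left_mem_Icc.mpr ha1x1.le) (right_mem_Icc.mpr ha1x1.le) ha1x1
    rwa [hWa1] at this
  -- but W x1 ≤ 0
  have hslope : s1 * eval x1 (derivative S1) ≤ 0 := by
    have hd : HasDerivWithinAt (fun t => eval t S1) (eval x1 (derivative S1)) (Iio x1) x1 :=
      (S1.hasDerivAt x1).hasDerivWithinAt
    rw [hasDerivWithinAt_iff_tendsto_slope] at hd
    have hset : Iio x1 \ {x1} = Iio x1 :=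
      Set.diff_singleton_eq_self (by simp)
    rw [hset] at hd
    have hd' : Filter.Tendsto (fun t => s1 * slope (fun t => eval t S1) x1 t)
        (nhdsWithin x1 (Iio x1)) (nhds (s1 * eval x1 (derivative S1))) := hd.const_mul s1
    refine le_of_tendsto hd' ?_
    filter_upwards [Ioo_mem_nhdsLT_of_mem (⟨ha1x1, le_refl x1⟩ : x1 ∈ Ioc a1 x1)] with t ht
    have h1 := hsign1 t ht
    have hts : slope (fun t => eval t S1) x1 t = (eval t S1 - eval x1 S1) / (t - x1) :=
      slope_def_field _ _ _
    rw [hts, hz1, sub_zero, mul_div_assoc']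
    exact div_nonpos_of_nonneg_of_nonpos h1.le (by linarith [ht.2])
  have hcont2 : 0 ≤ s2 * eval x1 S2 := by
    have hc : Filter.Tendsto (fun t => s2 * eval t S2) (nhdsWithin x1 (Iio x1))
        (nhds (s2 * eval x1 S2)) :=
      ((continuous_const.mul S2.continuous_aeval).tendsto x1).mono_left nhdsWithin_le_nhds
    refine ge_of_tendsto hc ?_
    filter_upwards [Ioo_mem_nhdsLT_of_mem (⟨ha1x1, le_refl x1⟩ : x1 ∈ Ioc a1 x1)] with t ht
    exact (hsign2 t ht).le
  have hWx1 : W x1 = J x1 * ((s1 * eval x1 (derivative S1)) * (s2 * eval x1 S2)) := by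
    simp only [hWdef, hz1]
    ring
  have hWx1nonpos : W x1 ≤ 0 := by
    rw [hWx1]
    have hJp := hJpos x1 ha1x1 hx1a2
    have hab : s1 * eval x1 (derivative S1) * (s2 * eval x1 S2) ≤ 0 :=
      mul_nonpos_iff.2 (Or.inr ⟨hslope, hcont2⟩)
    nlinarith [mul_nonneg hJp.le (neg_nonneg.2 hab)]
  linarith
end

section
/- Let S be a polynomial solution of the Lamé equation with Van Vleck parameter ν. If all zeros of S are real and simple, and between every zero of S and ν there lies either a zero of S' or the point α_2, then S has no zero strictly between α_2 and ν. -/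
open Polynomial Set

private lemma msum_pos (R : Multiset ℝ) (hR : R ≠ 0) (g : ℝ → ℝ)
    (hpos : ∀ r ∈ R, 0 < g r) : 0 < (R.map g).sum := by
  induction R using Multiset.induction_on with
  | empty => simp at hR
  | cons a s ih =>
    rcases eq_or_ne s 0 with rfl | hs
    · simpa using hpos a (Multiset.mem_cons_self _ _)
    · simp only [Multiset.map_cons, Multiset.sum_cons]
      have := ih hs (fun r hr => hpos r (Multiset.mem_cons_of_mem hr))
      have := hpos a (Multiset.mem_cons_self _ _)
      linarith

private lemma msum_map_sub (R : Multiset ℝ) (f g : ℝ → ℝ) :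
    (R.map (fun r => f r - g r)).sum = (R.map f).sum - (R.map g).sum := by
  induction R using Multiset.induction_on with
  | empty => simp
  | cons a s ih =>
    simp only [Multiset.map_cons, Multiset.sum_cons, ih]
    ring

private lemma aux_deriv (t : ℝ) (M : Multiset ℝ) (h : ∀ r ∈ M, r ≠ t) :
    (Polynomial.derivative (M.map (fun r => X - C r)).prod).eval t
      = ((M.map (fun r => X - C r)).prod.eval t) * (M.map (fun r => (t - r)⁻¹)).sum := by
  induction M using Multiset.induction_on with
  | empty => simp
  | cons a s ih =>
    have ha : a ≠ t := h a (Multiset.mem_cons_self _ _)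
    have hs := ih (fun r hr => h r (Multiset.mem_cons_of_mem hr))
    have hta : t - a ≠ 0 := sub_ne_zero.mpr (fun e => ha e.symm)
    simp only [Multiset.map_cons, Multiset.prod_cons, Multiset.sum_cons,
      derivative_mul, derivative_sub, derivative_X, derivative_C, sub_zero,
      eval_add, eval_mul, eval_sub, eval_X, eval_C, one_mul, eval_one, hs]
    field_simp

private lemma deriv_formula (S : Polynomial ℝ) (hreal : S.roots.card = S.natDegree)
    (t : ℝ) (ht : S.eval t ≠ 0) :
    S.derivative.eval t = S.eval t * (S.roots.map (fun r => (t - r)⁻¹)).sum := by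
  have hne : ∀ r ∈ S.roots, r ≠ t := by
    rintro r hr rfl
    exact ht (isRoot_of_mem_roots hr)
  have h := C_leadingCoeff_mul_prod_multiset_X_sub_C (p := S) hreal
  set sm : ℝ := (S.roots.map (fun r => (t - r)⁻¹)).sum with hsm
  conv_lhs => rw [← h]
  conv_rhs => rw [← h]
  rw [derivative_C_mul, eval_mul, eval_C, eval_mul, eval_C, aux_deriv t _ hne]
  ring

/-- If the derivative of `S` vanishes at `t`, `t` is not a root, and all roots are real,
then the sum of the reciprocals vanishes. -/
private lemma sum_zero_of_deriv (S : Polynomial ℝ) (hreal : S.roots.card = S.natDegree)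
    (t : ℝ) (ht : S.eval t ≠ 0) (h' : S.derivative.eval t = 0) :
    (S.roots.map (fun r => (t - r)⁻¹)).sum = 0 := by
  have := deriv_formula S hreal t ht
  rw [h'] at this
  rcases mul_eq_zero.mp this.symm with h | h
  · exact absurd h ht
  · exact h

private lemma one_pt_lt (S : Polynomial ℝ) (hreal : S.roots.card = S.natDegree)
    (hne : S.roots ≠ 0) (t : ℝ) (ht : S.eval t ≠ 0) (h' : S.derivative.eval t = 0)
    (hall : ∀ r ∈ S.roots, r < t) : False := by
  have h0 := sum_zero_of_deriv S hreal t ht h'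
  have hp : 0 < (S.roots.map (fun r => (t - r)⁻¹)).sum :=
    msum_pos _ hne _ (fun r hr => inv_pos.mpr (sub_pos.mpr (hall r hr)))
  linarith

private lemma one_pt_gt (S : Polynomial ℝ) (hreal : S.roots.card = S.natDegree)
    (hne : S.roots ≠ 0) (t : ℝ) (ht : S.eval t ≠ 0) (h' : S.derivative.eval t = 0)
    (hall : ∀ r ∈ S.roots, t < r) : False := by
  have h0 := sum_zero_of_deriv S hreal t ht h'
  have hp : 0 < (S.roots.map (fun r => -((t - r)⁻¹))).sum := by
    apply msum_pos _ hne
    intro r hr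
    have : t - r < 0 := sub_neg.mpr (hall r hr)
    simpa using inv_lt_zero.mpr this
  have heq : (S.roots.map (fun r => -((t - r)⁻¹))).sum
      = (S.roots.map (fun r => (0:ℝ) - (t - r)⁻¹)).sum := by
    congr 1
    apply Multiset.map_congr rfl
    intro r _
    ring
  rw [heq, msum_map_sub] at hp
  simp only [Multiset.map_const', Multiset.sum_replicate, smul_zero] at hp
  linarith

private lemma two_pt (S : Polynomial ℝ) (hreal : S.roots.card = S.natDegree)
    (hne : S.roots ≠ 0) (t1 t2 : ℝ) (h12 : t1 < t2)
    (ht1 : S.eval t1 ≠ 0) (ht2 : S.eval t2 ≠ 0)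
    (h1 : S.derivative.eval t1 = 0) (h2 : S.derivative.eval t2 = 0)
    (hgap : ∀ r ∈ S.roots, r < t1 ∨ t2 < r) : False := by
  have h01 := sum_zero_of_deriv S hreal t1 ht1 h1
  have h02 := sum_zero_of_deriv S hreal t2 ht2 h2
  have hp : 0 < (S.roots.map (fun r => (t1 - r)⁻¹ - (t2 - r)⁻¹)).sum := by
    apply msum_pos _ hne
    intro r hr
    have hprod : 0 < (t1 - r) * (t2 - r) := by
      rcases hgap r hr with h | h
      · exact mul_pos (by linarith) (by linarith)
      · exact mul_pos_of_neg_of_neg (by linarith) (by linarith)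
    have h1r : t1 - r ≠ 0 := fun e => by rw [e] at hprod; simp at hprod
    have h2r : t2 - r ≠ 0 := fun e => by rw [e] at hprod; simp at hprod
    have key : (t1 - r)⁻¹ - (t2 - r)⁻¹ = (t2 - t1) / ((t1 - r) * (t2 - r)) := by
      field_simp
      ring
    rw [key]
    exact div_pos (by linarith) hprod
  rw [msum_map_sub, h01, h02] at hp
  linarith

/-- If all zeros of `S` are real and simple, and between every zero of `S` and `ν`
there lies either a zero of `S'` or the point `α₂`, then `S` has no zero strictly
between `α₂` and `ν`. -/
theorem stmt_5 (a1 a2 a3 ν : ℝ)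
    (h12 : a1 < a2) (h23 : a2 < a3)
    (hν : ν ∈ Ioo a1 a3) (hνa2 : ν ≠ a2)
    (S : Polynomial ℝ) (hS0 : S ≠ 0)
    (hreal : S.roots.card = S.natDegree)
    (hsimple : ∀ x : ℝ, S.eval x = 0 → S.derivative.eval x ≠ 0)
    (hloc : ∀ x : ℝ, S.eval x = 0 → x ∈ Ioo a1 a3)
    (hza2 : ∀ x : ℝ, S.eval x = 0 → x ≠ a2)
    (hzν : ∀ x : ℝ, S.eval x = 0 → x ≠ ν)
    (hShah : ∀ x : ℝ, S.eval x = 0 →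
      ∃ y ∈ Ioo (min x ν) (max x ν), S.derivative.eval y = 0 ∨ y = a2) :
    ∀ x : ℝ, S.eval x = 0 → x ∉ Ioo (min a2 ν) (max a2 ν) := by
  intro z hz hzin
  have hzroot : z ∈ S.roots := by
    rw [mem_roots hS0]; exact hz
  have hRne : S.roots ≠ 0 := fun h => by rw [h] at hzroot; simp at hzroot
  have hmemroot : ∀ r : ℝ, r ∈ S.roots.toFinset ↔ S.eval r = 0 := by
    intro r
    rw [Multiset.mem_toFinset, mem_roots hS0]
    rfl
  rcases lt_or_gt_of_ne hνa2 with hlt | hgt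
  · -- ν < a2 : z ∈ Ioo ν a2
    rw [min_eq_right hlt.le, max_eq_left hlt.le] at hzin
    obtain ⟨hz1, hz2⟩ := hzin
    set F : Finset ℝ := S.roots.toFinset.filter (fun r => ν < r) with hF
    have hzF : z ∈ F := by
      rw [hF, Finset.mem_filter, hmemroot]; exact ⟨hz, hz1⟩
    have hFne : F.Nonempty := ⟨z, hzF⟩
    set x := F.min' hFne with hxdef
    have hxF : x ∈ F := F.min'_mem hFne
    have hxroot : S.eval x = 0 := by
      have := (Finset.mem_filter.mp hxF).1
      rwa [hmemroot] at this
    have hνx : ν < x := (Finset.mem_filter.mp hxF).2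
    have hxz : x ≤ z := F.min'_le z hzF
    obtain ⟨y, hy, hycase⟩ := hShah x hxroot
    rw [min_eq_right hνx.le, max_eq_left hνx.le] at hy
    have hya2 : y ≠ a2 := by
      intro e; rw [e] at hy
      linarith [hy.2]
    have hy' : S.derivative.eval y = 0 := by
      rcases hycase with h | h
      · exact h
      · exact absurd h hya2
    have hSy : S.eval y ≠ 0 := by
      intro h
      have : y ∈ F := by rw [hF, Finset.mem_filter, hmemroot]; exact ⟨h, hy.1⟩
      linarith [F.min'_le y this, hy.2]
    by_cases hdown : ∃ r ∈ S.roots, r < ν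
    · set G : Finset ℝ := S.roots.toFinset.filter (fun r => r < ν) with hG
      have hGne : G.Nonempty := by
        obtain ⟨r, hr, hrν⟩ := hdown
        exact ⟨r, by rw [hG, Finset.mem_filter, hmemroot]
                     exact ⟨isRoot_of_mem_roots hr, hrν⟩⟩
      set w := G.max' hGne with hwdef
      have hwG : w ∈ G := G.max'_mem hGne
      have hwroot : S.eval w = 0 := by
        have := (Finset.mem_filter.mp hwG).1
        rwa [hmemroot] at this
      have hwν : w < ν := (Finset.mem_filter.mp hwG).2
      obtain ⟨y', hy'', hy'case⟩ := hShah w hwroot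
      rw [min_eq_left hwν.le, max_eq_right hwν.le] at hy''
      have hy'a2 : y' ≠ a2 := by
        intro e; rw [e] at hy''
        linarith [hy''.2]
      have hy'deriv : S.derivative.eval y' = 0 := by
        rcases hy'case with h | h
        · exact h
        · exact absurd h hy'a2
      have hSy' : S.eval y' ≠ 0 := by
        intro h
        have : y' ∈ G := by rw [hG, Finset.mem_filter, hmemroot]; exact ⟨h, hy''.2⟩
        linarith [G.le_max' y' this, hy''.1]
      refine two_pt S hreal hRne y' y (by linarith [hy''.2, hy.1]) hSy' hSy hy'deriv hy' ?_
      intro r hr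
      have hrroot : S.eval r = 0 := isRoot_of_mem_roots hr
      rcases lt_trichotomy r ν with h | h | h
      · left
        have : r ∈ G := by rw [hG, Finset.mem_filter, hmemroot]; exact ⟨hrroot, h⟩
        linarith [G.le_max' r this, hy''.1]
      · exact absurd h (hzν r hrroot)
      · right
        have : r ∈ F := by rw [hF, Finset.mem_filter, hmemroot]; exact ⟨hrroot, h⟩
        linarith [F.min'_le r this, hy.2]
    · refine one_pt_gt S hreal hRne y hSy hy' ?_
      intro r hr
      have hrroot : S.eval r = 0 := isRoot_of_mem_roots hr
      have hrν : ν < r := by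
        rcases lt_trichotomy r ν with h | h | h
        · exact absurd ⟨r, hr, h⟩ hdown
        · exact absurd h (hzν r hrroot)
        · exact h
      have : r ∈ F := by rw [hF, Finset.mem_filter, hmemroot]; exact ⟨hrroot, hrν⟩
      linarith [F.min'_le r this, hy.2]
  · -- a2 < ν : z ∈ Ioo a2 ν
    rw [min_eq_left hgt.le, max_eq_right hgt.le] at hzin
    obtain ⟨hz1, hz2⟩ := hzin
    set F : Finset ℝ := S.roots.toFinset.filter (fun r => r < ν) with hF
    have hzF : z ∈ F := by
      rw [hF, Finset.mem_filter, hmemroot]; exact ⟨hz, hz2⟩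
    have hFne : F.Nonempty := ⟨z, hzF⟩
    set x := F.max' hFne with hxdef
    have hxF : x ∈ F := F.max'_mem hFne
    have hxroot : S.eval x = 0 := by
      have := (Finset.mem_filter.mp hxF).1
      rwa [hmemroot] at this
    have hxν : x < ν := (Finset.mem_filter.mp hxF).2
    have hzx : z ≤ x := F.le_max' z hzF
    obtain ⟨y, hy, hycase⟩ := hShah x hxroot
    rw [min_eq_left hxν.le, max_eq_right hxν.le] at hy
    have hya2 : y ≠ a2 := by
      intro e; rw [e] at hy
      linarith [hy.1]
    have hy' : S.derivative.eval y = 0 := by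
      rcases hycase with h | h
      · exact h
      · exact absurd h hya2
    have hSy : S.eval y ≠ 0 := by
      intro h
      have : y ∈ F := by rw [hF, Finset.mem_filter, hmemroot]; exact ⟨h, hy.2⟩
      linarith [F.le_max' y this, hy.1]
    by_cases hup : ∃ r ∈ S.roots, ν < r
    · set G : Finset ℝ := S.roots.toFinset.filter (fun r => ν < r) with hG
      have hGne : G.Nonempty := by
        obtain ⟨r, hr, hrν⟩ := hup
        exact ⟨r, by rw [hG, Finset.mem_filter, hmemroot]
                     exact ⟨isRoot_of_mem_roots hr, hrν⟩⟩
      set w := G.min' hGne with hwdef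
      have hwG : w ∈ G := G.min'_mem hGne
      have hwroot : S.eval w = 0 := by
        have := (Finset.mem_filter.mp hwG).1
        rwa [hmemroot] at this
      have hνw : ν < w := (Finset.mem_filter.mp hwG).2
      obtain ⟨y', hy'', hy'case⟩ := hShah w hwroot
      rw [min_eq_right hνw.le, max_eq_left hνw.le] at hy''
      have hy'a2 : y' ≠ a2 := by
        intro e; rw [e] at hy''
        linarith [hy''.1]
      have hy'deriv : S.derivative.eval y' = 0 := by
        rcases hy'case with h | h
        · exact h
        · exact absurd h hy'a2
      have hSy' : S.eval y' ≠ 0 := by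
        intro h
        have : y' ∈ G := by rw [hG, Finset.mem_filter, hmemroot]; exact ⟨h, hy''.1⟩
        linarith [G.min'_le y' this, hy''.2]
      refine two_pt S hreal hRne y y' (by linarith [hy.2, hy''.1]) hSy hSy' hy' hy'deriv ?_
      intro r hr
      have hrroot : S.eval r = 0 := isRoot_of_mem_roots hr
      rcases lt_trichotomy r ν with h | h | h
      · left
        have : r ∈ F := by rw [hF, Finset.mem_filter, hmemroot]; exact ⟨hrroot, h⟩
        linarith [F.le_max' r this, hy.1]
      · exact absurd h (hzν r hrroot)
      · right
        have : r ∈ G := by rw [hG, Finset.mem_filter, hmemroot]; exact ⟨hrroot, h⟩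
        linarith [G.min'_le r this, hy''.2]
    · refine one_pt_lt S hreal hRne y hSy hy' ?_
      intro r hr
      have hrroot : S.eval r = 0 := isRoot_of_mem_roots hr
      have hrν : r < ν := by
        rcases lt_trichotomy r ν with h | h | h
        · exact h
        · exact absurd h (hzν r hrroot)
        · exact absurd ⟨r, hr, h⟩ hup
      have : r ∈ F := by rw [hF, Finset.mem_filter, hmemroot]; exact ⟨hrroot, hrν⟩
      linarith [F.le_max' r this, hy.1]
end

section
/- Let f and g be real polynomials of the same degree k, all of whose zeros are simple and lie in (α_1, α_3) \ {α_2}. Suppose: (a) between any two consecutive zeros of f in (α_1,α_2), and between any zero of f in (α_1,α_2) and either endpoint α_1, α_2, there is a zero of g; and (b) f has exactly m zeros in (α_1,α_2) and g has exactly m+1 zeros in (α_1,α_2); and symmetrically (c) between any two consecutive zeros of g in (α_2,α_3), and between any zero of g in (α_2,α_3) and either endpoint α_2, α_3, there is a zero of f. Then the zeros of f and g strictly interlace: writing the zeros of f as x_1 < ... < x_k and those of g as y_1 < ... < y_k, one has y_1 < x_1 < y_2 < x_2 < ... < y_k < x_k. -/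
open Polynomial Set


private lemma aux_id (n : ℕ) (c : ℕ → ℕ) (hm : ∀ s, s + 1 ≤ n → c s < c (s + 1))
    (hub : ∀ s ≤ n, c s ≤ n) : ∀ s ≤ n, c s = s := by
  have key : ∀ d s, s + d ≤ n → c s + d ≤ c (s + d) := by
    intro d
    induction d with
    | zero => intro s _; simp
    | succ d ih =>
      intro s hs
      have h1 := ih s (by omega)
      have h2 := hm (s + d) (by omega)
      have he : s + (d + 1) = s + d + 1 := by omega
      rw [he]
      omega
  intro s hs
  have h1 := key s 0 (by omega)
  have h2 := key (n - s) s (by omega)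
  have h3 := hub n le_rfl
  simp only [Nat.zero_add] at h1
  have he : s + (n - s) = n := by omega
  rw [he] at h2
  omega

private lemma Emono {n : ℕ} {E : ℕ → ℝ} (hE : ∀ s ≤ n, E s < E (s+1)) :
    ∀ d s, s + d ≤ n + 1 → E s ≤ E (s + d) := by
  intro d
  induction d with
  | zero => intro s _; simp
  | succ d ih =>
    intro s hs
    have h1 := ih s (by omega)
    have h2 := hE (s + d) (by omega)
    calc E s ≤ E (s + d) := h1
      _ ≤ E (s + d + 1) := le_of_lt h2

private lemma filter_card_iff {k m : ℕ} (P : Fin k → Prop) [DecidablePred P]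
    (hdc : ∀ i j : Fin k, i ≤ j → P j → P i)
    (hcard : (Finset.univ.filter (fun i => P i)).card = m) :
    ∀ i : Fin k, P i ↔ (i : ℕ) < m := by
  intro i
  constructor
  · intro hPi
    have hsub : Finset.Iic i ⊆ Finset.univ.filter (fun j => P j) := by
      intro j hj
      simp only [Finset.mem_Iic] at hj
      simp only [Finset.mem_filter, Finset.mem_univ, true_and]
      exact hdc j i hj hPi
    have hle := Finset.card_le_card hsub
    rw [hcard, Fin.card_Iic] at hle
    omega
  · intro him
    by_contra hPi
    have hsub : Finset.univ.filter (fun j => P j) ⊆ Finset.Iio i := by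
      intro j hj
      simp only [Finset.mem_filter, Finset.mem_univ, true_and] at hj
      simp only [Finset.mem_Iio]
      by_contra hji
      exact hPi (hdc i j (le_of_not_gt hji) hj)
    have hle := Finset.card_le_card hsub
    rw [hcard, Fin.card_Iio] at hle
    omega

private lemma gap_lemma {k : ℕ} (n o : ℕ) (z : Fin k → ℝ) (hz : StrictMono z)
    (E : ℕ → ℝ) (hE : ∀ s ≤ n, E s < E (s+1))
    (hwit : ∀ s, s ≤ n → ∃ j : Fin k, z j ∈ Ioo (E s) (E (s+1)))
    (hloc : ∀ j : Fin k, E 0 < z j → z j < E (n+1) → o ≤ (j:ℕ) ∧ (j:ℕ) < o + n + 1) :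
    ∀ s, s ≤ n → ∀ j : Fin k, (j : ℕ) = o + s → z j ∈ Ioo (E s) (E (s+1)) := by
  classical
  have hle := Emono hE
  choose c hc using hwit
  have hbound : ∀ s (h : s ≤ n), o ≤ ((c s h : Fin k) : ℕ) ∧ ((c s h : Fin k) : ℕ) < o + n + 1 := by
    intro s h
    apply hloc
    · have h0 : E 0 ≤ E s := by
        have := hle s 0 (by omega)
        simpa using this
      exact lt_of_le_of_lt h0 (hc s h).1
    · have h1 : E (s + 1) ≤ E (n + 1) := by
        have := hle (n - s) (s + 1) (by omega)
        have he : s + 1 + (n - s) = n + 1 := by omega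
        rwa [he] at this
      exact lt_of_lt_of_le (hc s h).2 h1
  let C : ℕ → ℕ := fun s => if h : s ≤ n then ((c s h : Fin k) : ℕ) - o else 0
  have hCid : ∀ s ≤ n, C s = s := by
    apply aux_id
    · intro s hs
      have h1 : s ≤ n := by omega
      have h2 : s + 1 ≤ n := hs
      have hlt : (c s h1 : Fin k) < c (s+1) h2 := by
        rw [← hz.lt_iff_lt]
        calc z (c s h1) < E (s + 1) := (hc s h1).2
          _ < z (c (s+1) h2) := (hc (s+1) h2).1
      have hb1 := hbound s h1
      have hb2 := hbound (s+1) h2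
      simp only [C, dif_pos h1, dif_pos h2]
      have hlt' : ((c s h1 : Fin k) : ℕ) < ((c (s+1) h2 : Fin k) : ℕ) := hlt
      omega
    · intro s hs
      have hb1 := hbound s hs
      simp only [C, dif_pos hs]
      omega
  intro s hs j hj
  have hcs : ((c s hs : Fin k) : ℕ) = o + s := by
    have := hCid s hs
    simp only [C, dif_pos hs] at this
    have hb1 := hbound s hs
    omega
  have hje : j = c s hs := Fin.ext (hj.trans hcs.symm)
  rw [hje]
  exact hc s hs


/-- Combinatorial interlacing step: if `f` and `g` are degree-`k` polynomials with
simple zeros in `(α₁,α₂) ∪ (α₂,α₃)`, `g` separates the zeros of `f` in `(α₁,α₂)`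
(including from the endpoints), `f` separates the zeros of `g` in `(α₂,α₃)`
(including from the endpoints), and `f` has `m` zeros while `g` has `m+1` zeros
in `(α₁,α₂)`, then the zeros strictly interlace: `y₁ < x₁ < y₂ < ⋯ < y_k < x_k`. -/
theorem stmt_6 (a1 a2 a3 : ℝ) (h12 : a1 < a2) (h23 : a2 < a3)
    (k m : ℕ) (f g : Polynomial ℝ)
    (hfd : f.natDegree = k) (hgd : g.natDegree = k)
    (x y : Fin k → ℝ) (hx : StrictMono x) (hy : StrictMono y)
    (hxz : ∀ i, f.eval (x i) = 0) (hxall : ∀ t : ℝ, f.eval t = 0 → ∃ i, t = x i)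
    (hyz : ∀ i, g.eval (y i) = 0) (hyall : ∀ t : ℝ, g.eval t = 0 → ∃ i, t = y i)
    (hxloc : ∀ i, x i ∈ Ioo a1 a2 ∪ Ioo a2 a3)
    (hyloc : ∀ i, y i ∈ Ioo a1 a2 ∪ Ioo a2 a3)
    -- (a): g separates consecutive zeros of f in (α₁,α₂) and from both endpoints
    (ha : ∀ u v : ℝ, f.eval u = 0 → f.eval v = 0 → u ∈ Ioo a1 a2 → v ∈ Ioo a1 a2 →
      u < v → (∀ t ∈ Ioo u v, f.eval t ≠ 0) → ∃ w ∈ Ioo u v, g.eval w = 0)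
    (ha' : ∀ u : ℝ, f.eval u = 0 → u ∈ Ioo a1 a2 →
      (∃ w ∈ Ioo a1 u, g.eval w = 0) ∧ (∃ w ∈ Ioo u a2, g.eval w = 0))
    -- (b): zero counts in (α₁,α₂)
    (hb : (Finset.univ.filter (fun i => x i ∈ Ioo a1 a2)).card = m)
    (hb' : (Finset.univ.filter (fun i => y i ∈ Ioo a1 a2)).card = m + 1)
    -- (c): f separates consecutive zeros of g in (α₂,α₃) and from both endpoints
    (hc : ∀ u v : ℝ, g.eval u = 0 → g.eval v = 0 → u ∈ Ioo a2 a3 → v ∈ Ioo a2 a3 →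
      u < v → (∀ t ∈ Ioo u v, g.eval t ≠ 0) → ∃ w ∈ Ioo u v, f.eval w = 0)
    (hc' : ∀ u : ℝ, g.eval u = 0 → u ∈ Ioo a2 a3 →
      (∃ w ∈ Ioo a2 u, f.eval w = 0) ∧ (∃ w ∈ Ioo u a3, f.eval w = 0)) :
    ∀ i : Fin k, y i < x i ∧ ∀ (h : (i : ℕ) + 1 < k), x i < y ⟨(i : ℕ) + 1, h⟩ := by
  classical
  have hmk : m + 1 ≤ k := by
    have h1 := Finset.card_filter_le (Finset.univ : Finset (Fin k)) (fun i => y i ∈ Ioo a1 a2)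
    rw [hb'] at h1
    simpa using h1
  have hmklt : m < k := by omega
  have hxdc : ∀ i j : Fin k, i ≤ j → x j ∈ Ioo a1 a2 → x i ∈ Ioo a1 a2 := by
    intro i j hij hj
    rcases hxloc i with h | h
    · exact h
    · have hle : x i ≤ x j := hx.monotone hij
      exact absurd (lt_of_le_of_lt hle hj.2) (not_lt.mpr h.1.le)
  have hydc : ∀ i j : Fin k, i ≤ j → y j ∈ Ioo a1 a2 → y i ∈ Ioo a1 a2 := by
    intro i j hij hj
    rcases hyloc i with h | h
    · exact h
    · have hle : y i ≤ y j := hy.monotone hij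
      exact absurd (lt_of_le_of_lt hle hj.2) (not_lt.mpr h.1.le)
  have hxm : ∀ i : Fin k, x i ∈ Ioo a1 a2 ↔ (i:ℕ) < m := filter_card_iff _ hxdc hb
  have hym : ∀ i : Fin k, y i ∈ Ioo a1 a2 ↔ (i:ℕ) < m + 1 := filter_card_iff _ hydc hb'
  have hxr : ∀ i : Fin k, m ≤ (i:ℕ) → x i ∈ Ioo a2 a3 := by
    intro i hi
    rcases hxloc i with h | h
    · exact absurd ((hxm i).1 h) (by omega)
    · exact h
  have hyr : ∀ i : Fin k, m + 1 ≤ (i:ℕ) → y i ∈ Ioo a2 a3 := by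
    intro i hi
    rcases hyloc i with h | h
    · exact absurd ((hym i).1 h) (by omega)
    · exact h
  -- left gap structure
  set E1 : ℕ → ℝ := fun s =>
    if s = 0 then a1 else if h : s - 1 < m then x ⟨s - 1, h.trans hmklt⟩ else a2 with hE1def
  have hE1z : E1 0 = a1 := by simp [hE1def]
  have hE1x : ∀ s, s ≠ 0 → (s - 1 < m) → ∀ j : Fin k, (j:ℕ) = s - 1 → E1 s = x j := by
    intro s hs h j hj
    simp only [hE1def]
    rw [if_neg hs, dif_pos h]
    congr 1
    exact Fin.ext hj.symm
  have hE1t : ∀ s, s ≠ 0 → ¬ (s - 1 < m) → E1 s = a2 := by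
    intro s hs h
    simp only [hE1def]
    rw [if_neg hs, dif_neg h]
  have hE1lt : ∀ s, s ≤ m → E1 s < E1 (s + 1) := by
    intro s hs
    rcases Nat.eq_zero_or_pos s with h0 | h0
    · subst h0
      rcases Nat.eq_zero_or_pos m with hm0 | hm0
      · rw [hE1z, hE1t 1 (by omega) (by omega)]
        exact h12
      · rw [hE1z, hE1x 1 (by omega) (by omega) ⟨0, by omega⟩ rfl]
        exact ((hxm ⟨0, by omega⟩).2 (by show (0:ℕ) < m; omega)).1
    · rw [hE1x s (by omega) (by omega) ⟨s - 1, by omega⟩ rfl]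
      rcases lt_or_ge s m with hsm | hsm
      · rw [hE1x (s+1) (by omega) (by omega) ⟨s, by omega⟩ rfl]
        exact hx (by exact Fin.mk_lt_mk.mpr (by omega))
      · rw [hE1t (s+1) (by omega) (by omega)]
        exact ((hxm ⟨s - 1, by omega⟩).2 (by show s - 1 < m; omega)).2
  have hwit1 : ∀ s, s ≤ m → ∃ j : Fin k, y j ∈ Ioo (E1 s) (E1 (s+1)) := by
    intro s hs
    rcases Nat.eq_zero_or_pos m with hm0 | hm0
    · have hs0 : s = 0 := by omega
      subst hs0
      refine ⟨⟨0, by omega⟩, ?_⟩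
      rw [hE1z, hE1t 1 (by omega) (by omega)]
      exact (hym ⟨0, by omega⟩).2 (by show (0:ℕ) < m + 1; omega)
    · rcases Nat.eq_zero_or_pos s with hs0 | hs1
      · subst hs0
        have hx0 : x ⟨0, by omega⟩ ∈ Ioo a1 a2 := (hxm _).2 (by show (0:ℕ) < m; omega)
        obtain ⟨⟨w, hw, hgw⟩, -⟩ := ha' _ (hxz ⟨0, by omega⟩) hx0
        obtain ⟨j, rfl⟩ := hyall w hgw
        refine ⟨j, ?_⟩
        rw [hE1z, hE1x 1 (by omega) (by omega) ⟨0, by omega⟩ rfl]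
        exact hw
      · rcases lt_or_ge s m with hsm | hsm
        · have hlt : x ⟨s - 1, by omega⟩ < x ⟨s, by omega⟩ :=
            hx (Fin.mk_lt_mk.mpr (by omega))
          have hnz : ∀ t ∈ Ioo (x ⟨s - 1, by omega⟩) (x ⟨s, by omega⟩), f.eval t ≠ 0 := by
            intro t ht hft
            obtain ⟨l, rfl⟩ := hxall t hft
            have h3 : s - 1 < (l:ℕ) := hx.lt_iff_lt.mp ht.1
            have h4 : (l:ℕ) < s := hx.lt_iff_lt.mp ht.2
            omega
          obtain ⟨w, hw, hgw⟩ := ha _ _ (hxz _) (hxz _)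
            ((hxm ⟨s - 1, by omega⟩).2 (by show s - 1 < m; omega))
            ((hxm ⟨s, by omega⟩).2 (by show s < m; omega)) hlt hnz
          obtain ⟨j, rfl⟩ := hyall w hgw
          refine ⟨j, ?_⟩
          rw [hE1x s (by omega) (by omega) ⟨s - 1, by omega⟩ rfl,
            hE1x (s+1) (by omega) (by omega) ⟨s, by omega⟩ rfl]
          exact hw
        · obtain ⟨-, ⟨w, hw, hgw⟩⟩ := ha' _ (hxz ⟨s - 1, by omega⟩)
            ((hxm ⟨s - 1, by omega⟩).2 (by show s - 1 < m; omega))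
          obtain ⟨j, rfl⟩ := hyall w hgw
          refine ⟨j, ?_⟩
          rw [hE1x s (by omega) (by omega) ⟨s - 1, by omega⟩ rfl,
            hE1t (s+1) (by omega) (by omega)]
          exact hw
  have hloc1 : ∀ j : Fin k, E1 0 < y j → y j < E1 (m+1) → 0 ≤ (j:ℕ) ∧ (j:ℕ) < 0 + m + 1 := by
    intro j hj1 hj2
    rw [hE1z] at hj1
    rw [hE1t (m+1) (by omega) (by omega)] at hj2
    have := (hym j).1 ⟨hj1, hj2⟩
    omega
  have hleft := gap_lemma m 0 y hy E1 hE1lt hwit1 hloc1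
  -- right gap structure
  set E2 : ℕ → ℝ := fun s =>
    if s = 0 then a2 else if h : m + s < k then y ⟨m + s, h⟩ else a3 with hE2def
  have hE2z : E2 0 = a2 := by simp [hE2def]
  have hE2y : ∀ s, s ≠ 0 → (m + s < k) → ∀ j : Fin k, (j:ℕ) = m + s → E2 s = y j := by
    intro s hs h j hj
    simp only [hE2def]
    rw [if_neg hs, dif_pos h]
    congr 1
    exact Fin.ext hj.symm
  have hE2t : ∀ s, s ≠ 0 → ¬ (m + s < k) → E2 s = a3 := by
    intro s hs h
    simp only [hE2def]
    rw [if_neg hs, dif_neg h]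
  have hE2lt : ∀ s, s ≤ k - m - 1 → E2 s < E2 (s + 1) := by
    intro s hs
    rcases Nat.eq_zero_or_pos s with h0 | h0
    · subst h0
      rcases lt_or_ge (m + 1) k with hk1 | hk1
      · rw [hE2z, hE2y 1 (by omega) (by omega) ⟨m + 1, by omega⟩ rfl]
        exact (hyr ⟨m + 1, by omega⟩ (by show m + 1 ≤ m + 1; omega)).1
      · rw [hE2z, hE2t 1 (by omega) (by omega)]
        exact h23
    · rw [hE2y s (by omega) (by omega) ⟨m + s, by omega⟩ rfl]
      rcases lt_or_ge (m + s + 1) k with hk1 | hk1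
      · rw [hE2y (s+1) (by omega) (by omega) ⟨m + s + 1, by omega⟩ rfl]
        exact hy (Fin.mk_lt_mk.mpr (by omega))
      · rw [hE2t (s+1) (by omega) (by omega)]
        exact (hyr ⟨m + s, by omega⟩ (by show m + 1 ≤ m + s; omega)).2
  have hwit2 : ∀ s, s ≤ k - m - 1 → ∃ j : Fin k, x j ∈ Ioo (E2 s) (E2 (s+1)) := by
    intro s hs
    rcases Nat.eq_zero_or_pos s with hs0 | hs1
    · subst hs0
      rcases lt_or_ge (m + 1) k with hk1 | hk1
      · have hy1 : y ⟨m + 1, by omega⟩ ∈ Ioo a2 a3 :=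
          hyr ⟨m + 1, by omega⟩ (by show m + 1 ≤ m + 1; omega)
        obtain ⟨⟨w, hw, hfw⟩, -⟩ := hc' _ (hyz ⟨m + 1, by omega⟩) hy1
        obtain ⟨j, rfl⟩ := hxall w hfw
        refine ⟨j, ?_⟩
        rw [hE2z, hE2y 1 (by omega) (by omega) ⟨m + 1, by omega⟩ rfl]
        exact hw
      · refine ⟨⟨m, hmklt⟩, ?_⟩
        rw [hE2z, hE2t 1 (by omega) (by omega)]
        exact hxr ⟨m, hmklt⟩ (by show m ≤ m; omega)
    · rcases lt_or_ge (m + s + 1) k with hk1 | hk1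
      · have hlt : y ⟨m + s, by omega⟩ < y ⟨m + s + 1, by omega⟩ :=
          hy (Fin.mk_lt_mk.mpr (by omega))
        have hnz : ∀ t ∈ Ioo (y ⟨m + s, by omega⟩) (y ⟨m + s + 1, by omega⟩), g.eval t ≠ 0 := by
          intro t ht hgt
          obtain ⟨l, rfl⟩ := hyall t hgt
          have h3 : m + s < (l:ℕ) := hy.lt_iff_lt.mp ht.1
          have h4 : (l:ℕ) < m + s + 1 := hy.lt_iff_lt.mp ht.2
          omega
        obtain ⟨w, hw, hfw⟩ := hc _ _ (hyz _) (hyz _)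
          (hyr ⟨m + s, by omega⟩ (by show m + 1 ≤ m + s; omega))
          (hyr ⟨m + s + 1, by omega⟩ (by show m + 1 ≤ m + s + 1; omega)) hlt hnz
        obtain ⟨j, rfl⟩ := hxall w hfw
        refine ⟨j, ?_⟩
        rw [hE2y s (by omega) (by omega) ⟨m + s, by omega⟩ rfl,
          hE2y (s+1) (by omega) (by omega) ⟨m + s + 1, by omega⟩ rfl]
        exact hw
      · obtain ⟨-, ⟨w, hw, hfw⟩⟩ := hc' _ (hyz ⟨m + s, by omega⟩)
          (hyr ⟨m + s, by omega⟩ (by show m + 1 ≤ m + s; omega))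
        obtain ⟨j, rfl⟩ := hxall w hfw
        refine ⟨j, ?_⟩
        rw [hE2y s (by omega) (by omega) ⟨m + s, by omega⟩ rfl,
          hE2t (s+1) (by omega) (by omega)]
        exact hw
  have hloc2 : ∀ j : Fin k, E2 0 < x j → x j < E2 (k - m - 1 + 1) →
      m ≤ (j:ℕ) ∧ (j:ℕ) < m + (k - m - 1) + 1 := by
    intro j hj1 hj2
    rw [hE2z] at hj1
    constructor
    · by_contra hjm
      have := ((hxm j).2 (by omega)).2
      linarith
    · have := j.isLt
      omega
  have hright := gap_lemma (k - m - 1) m x hx E2 hE2lt hwit2 hloc2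
  -- assembly
  intro i
  rcases lt_trichotomy ((i:ℕ)) m with him | him | him
  · constructor
    · have h1 := hleft (i:ℕ) (by omega) i (by omega)
      rw [hE1x ((i:ℕ)+1) (by omega) (by omega) i (by omega)] at h1
      exact h1.2
    · intro h
      have h2 := hleft ((i:ℕ)+1) (by omega) ⟨(i:ℕ)+1, h⟩ (by show (i:ℕ)+1 = 0 + ((i:ℕ)+1); omega)
      rw [hE1x ((i:ℕ)+1) (by omega) (by omega) i (by omega)] at h2
      exact h2.1
  · constructor
    · have hy1 : y i ∈ Ioo a1 a2 := (hym i).2 (by omega)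
      have hx1 : x i ∈ Ioo a2 a3 := hxr i (by omega)
      exact lt_trans hy1.2 hx1.1
    · intro h
      have h1 := hright 0 (by omega) i (by omega)
      rw [hE2y 1 (by omega) (by omega) ⟨(i:ℕ)+1, h⟩ (by show (i:ℕ)+1 = m + 1; omega)] at h1
      exact h1.2
  · have hikm : (i:ℕ) - m ≤ k - m - 1 := by
      have := i.isLt
      omega
    constructor
    · have h1 := hright ((i:ℕ) - m) hikm i (by omega)
      rw [hE2y ((i:ℕ) - m) (by omega) (by omega) i (by omega)] at h1
      exact h1.1
    · intro h
      have h1 := hright ((i:ℕ) - m) hikm i (by omega)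
      rw [hE2y ((i:ℕ) - m + 1) (by omega) (by omega) ⟨(i:ℕ)+1, h⟩
        (by show (i:ℕ)+1 = m + ((i:ℕ) - m + 1); omega)] at h1
      exact h1.2
end

section
/- Let S be a polynomial solution of degree k of the Lamé equation with parameter ν_k, and S̃ a polynomial solution of degree k+1 with parameter ν_{k+1}, and let μ_k = k(k-1+σ), μ_{k+1} = (k+1)(k+σ) with σ = ρ_1+ρ_2+ρ_3. Then on any interval avoiding α_1, α_2, α_3, with J(x) = ∏_j |x-α_j|^{ρ_j}: d/dx [ J(x)(S̃'(x)S(x) − S̃(x)S'(x)) ] = (μ_{k+1} − μ_k)(J(x)/A(x))(x − ν̂) S(x) S̃(x), where ν̂ = (μ_{k+1} ν_{k+1} − μ_k ν_k)/(μ_{k+1} − μ_k). -/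
open Polynomial


lemma abs_rpow_hasDerivAt (a r x : ℝ) (hx : x ≠ a) :
    HasDerivAt (fun t : ℝ => |t - a| ^ r) (r * |x - a| ^ r / (x - a)) x := by
  rcases lt_or_gt_of_ne hx with h | h
  · have hpos : 0 < a - x := by linarith
    have hd : HasDerivAt (fun t : ℝ => (a - t) ^ r) ((-1) * r * (a - x) ^ (r - 1)) x := by
      have h1 : HasDerivAt (fun t : ℝ => a - t) (-1) x := by
        simpa using (hasDerivAt_id x).const_sub a
      exact h1.rpow_const (Or.inl (ne_of_gt hpos))
    have heq : (fun t : ℝ => |t - a| ^ r) =ᶠ[nhds x] (fun t : ℝ => (a - t) ^ r) := by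
      filter_upwards [Iio_mem_nhds h] with t ht
      rw [abs_of_neg (by simp at ht; linarith)]
      ring_nf
    have := hd.congr_of_eventuallyEq heq
    refine this.congr_deriv ?_
    rw [abs_of_neg (by linarith), Real.rpow_sub hpos, Real.rpow_one]
    rw [show -(x - a) = a - x from by ring, show x - a = -(a - x) from by ring, div_neg]
    ring
  · have hpos : 0 < x - a := by linarith
    have hd : HasDerivAt (fun t : ℝ => (t - a) ^ r) (1 * r * (x - a) ^ (r - 1)) x :=
      ((hasDerivAt_id x).sub_const a).rpow_const (Or.inl (ne_of_gt hpos))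
    have heq : (fun t : ℝ => |t - a| ^ r) =ᶠ[nhds x] (fun t : ℝ => (t - a) ^ r) := by
      filter_upwards [Ioi_mem_nhds h] with t ht
      rw [abs_of_pos (by simp at ht; linarith)]
    have := hd.congr_of_eventuallyEq heq
    refine this.congr_deriv ?_
    rw [abs_of_pos hpos, Real.rpow_sub hpos, Real.rpow_one]
    field_simp

/-- For Stieltjes solutions `S` (degree `k`, parameter `ν_k`) and `S̃` (degree `k+1`,
parameter `ν_{k+1}`), with `μ_k = k(k-1+σ)`, `μ_{k+1} = (k+1)(k+σ)`, `σ = ρ₁+ρ₂+ρ₃`,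
and `J(x) = ∏ |x-αⱼ|^{ρⱼ}`, one has away from the singular points
`(J(S̃'S − S̃S'))' = (μ_{k+1}−μ_k)(J/A)(x−ν̂) S S̃` where
`ν̂ = (μ_{k+1}ν_{k+1} − μ_k ν_k)/(μ_{k+1}−μ_k)`. -/
theorem stmt_8 (a1 a2 a3 r1 r2 r3 νk νk1 : ℝ)
    (h12 : a1 < a2) (h23 : a2 < a3)
    (hr1 : 0 < r1) (hr2 : 0 < r2) (hr3 : 0 < r3)
    (k : ℕ) (hk : 1 ≤ k)
    (μk μk1 : ℝ)
    (hμk : μk = (k : ℝ) * ((k : ℝ) - 1 + (r1 + r2 + r3)))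
    (hμk1 : μk1 = ((k : ℝ) + 1) * ((k : ℝ) + (r1 + r2 + r3)))
    (S St : Polynomial ℝ) (hSd : S.natDegree = k) (hStd : St.natDegree = k + 1)
    (hodeS : ∀ x : ℝ, x ≠ a1 → x ≠ a2 → x ≠ a3 →
      S.derivative.derivative.eval x
        + (r1 / (x - a1) + r2 / (x - a2) + r3 / (x - a3)) * S.derivative.eval x
        = μk * (x - νk) / ((x - a1) * (x - a2) * (x - a3)) * S.eval x)
    (hodeSt : ∀ x : ℝ, x ≠ a1 → x ≠ a2 → x ≠ a3 →
      St.derivative.derivative.eval x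
        + (r1 / (x - a1) + r2 / (x - a2) + r3 / (x - a3)) * St.derivative.eval x
        = μk1 * (x - νk1) / ((x - a1) * (x - a2) * (x - a3)) * St.eval x) :
    ∀ x : ℝ, x ≠ a1 → x ≠ a2 → x ≠ a3 →
      HasDerivAt (fun t : ℝ =>
          (|t - a1| ^ r1 * |t - a2| ^ r2 * |t - a3| ^ r3)
            * (St.derivative.eval t * S.eval t - St.eval t * S.derivative.eval t))
        ((μk1 - μk)
          * ((|x - a1| ^ r1 * |x - a2| ^ r2 * |x - a3| ^ r3)
              / ((x - a1) * (x - a2) * (x - a3)))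
          * (x - (μk1 * νk1 - μk * νk) / (μk1 - μk))
          * S.eval x * St.eval x) x := by
  intro x hx1 hx2 hx3
  have e1 : x - a1 ≠ 0 := sub_ne_zero.mpr hx1
  have e2 : x - a2 ≠ 0 := sub_ne_zero.mpr hx2
  have e3 : x - a3 ≠ 0 := sub_ne_zero.mpr hx3
  have hk1 : (1 : ℝ) ≤ (k : ℝ) := by exact_mod_cast hk
  have hμ : μk1 - μk ≠ 0 := by nlinarith
  have hJ1 := abs_rpow_hasDerivAt a1 r1 x hx1
  have hJ2 := abs_rpow_hasDerivAt a2 r2 x hx2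
  have hJ3 := abs_rpow_hasDerivAt a3 r3 x hx3
  have hJ := (hJ1.mul hJ2).mul hJ3
  have hW := ((St.derivative.hasDerivAt x).mul (S.hasDerivAt x)).sub
      ((St.hasDerivAt x).mul (S.derivative.hasDerivAt x))
  have h := hJ.mul hW
  refine h.congr_deriv ?_
  simp only [Pi.mul_apply, Pi.sub_apply]
  have hS2 : S.derivative.derivative.eval x
      = μk * (x - νk) / ((x - a1) * (x - a2) * (x - a3)) * S.eval x
        - (r1 / (x - a1) + r2 / (x - a2) + r3 / (x - a3)) * S.derivative.eval x := by
    have := hodeS x hx1 hx2 hx3; linarith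
  have hSt2 : St.derivative.derivative.eval x
      = μk1 * (x - νk1) / ((x - a1) * (x - a2) * (x - a3)) * St.eval x
        - (r1 / (x - a1) + r2 / (x - a2) + r3 / (x - a3)) * St.derivative.eval x := by
    have := hodeSt x hx1 hx2 hx3; linarith
  rw [hS2, hSt2]
  field_simp
  ring
end

section
/- Define θ(ν) = (1/π) ∫_{α_1}^{min(α_2,ν)} √(|(ν − x)/A(x)|) dx for ν ∈ [α_1, α_3], where A(x) = ∏_{j=1}^3 (x − α_j). Then θ is continuous and strictly increasing on [α_1, α_3], with θ(α_1) = 0 and θ(α_3) = 1. In particular, for every θ_0 ∈ [0,1] there is a unique ν ∈ [α_1, α_3] with θ(ν) = θ_0. -/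
open Real Set MeasureTheory Filter Topology intervalIntegral

namespace Stmt11Aux

noncomputable def ff (a1 a2 a3 ν x : ℝ) : ℝ :=
  Real.sqrt |(ν - x) / ((x - a1) * (x - a2) * (x - a3))|

noncomputable def FF (a1 a2 : ℝ) (x : ℝ) : ℝ := 1 / Real.sqrt ((x - a1) * (a2 - x))

variable {a1 a2 a3 ν x : ℝ}

lemma measurable_ff : Measurable (ff a1 a2 a3 ν) := by
  apply Measurable.comp Real.continuous_sqrt.measurable
  exact ((measurable_const.sub measurable_id).div
    ((((measurable_id.sub measurable_const)).mul (measurable_id.sub measurable_const)).mul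
      (measurable_id.sub measurable_const))).abs

lemma measurable_FF : Measurable (FF a1 a2) := by
  apply measurable_const.div
  exact Real.continuous_sqrt.measurable.comp
    ((measurable_id.sub measurable_const).mul (measurable_const.sub measurable_id))

lemma FF_nonneg : 0 ≤ FF a1 a2 x := by unfold FF; positivity

lemma ff_nonneg : 0 ≤ ff a1 a2 a3 ν x := Real.sqrt_nonneg _

lemma abs_A (h23 : a2 < a3) (hx1 : a1 < x) (hx2 : x < a2) :
    |(x - a1) * (x - a2) * (x - a3)| = (x - a1) * (a2 - x) * (a3 - x) := by
  rw [abs_mul, abs_mul, abs_of_pos (by linarith : (0:ℝ) < x - a1),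
    abs_of_neg (by linarith : x - a2 < 0), abs_of_neg (by linarith : x - a3 < 0)]
  ring

lemma ff_eq (h23 : a2 < a3) (hx1 : a1 < x) (hx2 : x < a2) (hxν : x ≤ ν) :
    ff a1 a2 a3 ν x = Real.sqrt ((ν - x) / ((x - a1) * ((a2 - x) * (a3 - x)))) := by
  rw [ff, abs_div, abs_A h23 hx1 hx2, abs_of_nonneg (by linarith : (0:ℝ) ≤ ν - x), mul_assoc]

lemma ff_le_FF (h23 : a2 < a3) (hx1 : a1 < x) (hx2 : x ≤ a2) (hxν : x ≤ ν) (hν3 : ν ≤ a3) :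
    ff a1 a2 a3 ν x ≤ FF a1 a2 x := by
  rcases eq_or_lt_of_le hx2 with rfl | hx2
  · simp [ff, FF]
  · rw [ff_eq h23 hx1 hx2 hxν, FF, one_div, ← Real.sqrt_inv]
    apply Real.sqrt_le_sqrt
    have hP : (0:ℝ) < (x - a1) * (a2 - x) := by nlinarith
    rw [inv_eq_one_div, div_le_div_iff₀ (by nlinarith) hP]
    nlinarith [mul_nonneg hP.le (by linarith : (0:ℝ) ≤ a3 - ν)]

lemma ff_lt_ff (h23 : a2 < a3) (hx1 : a1 < x) (hx2 : x < a2) (hxν : x ≤ ν) {ν' : ℝ}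
    (hνν' : ν < ν') :
    ff a1 a2 a3 ν x < ff a1 a2 a3 ν' x := by
  rw [ff_eq h23 hx1 hx2 hxν, ff_eq h23 hx1 hx2 (by linarith)]
  have hQ : (0:ℝ) < (x - a1) * ((a2 - x) * (a3 - x)) :=
    mul_pos (by linarith) (mul_pos (by linarith) (by linarith))
  exact Real.sqrt_lt_sqrt (div_nonneg (by linarith) hQ.le)
    (by rw [div_lt_div_iff₀ hQ hQ]; nlinarith)

lemma ff_pos (h23 : a2 < a3) (hx1 : a1 < x) (hx2 : x < a2) (hxν : x < ν) :
    0 < ff a1 a2 a3 ν x := by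
  rw [ff_eq h23 hx1 hx2 hxν.le]
  have hQ : (0:ℝ) < (x - a1) * ((a2 - x) * (a3 - x)) :=
    mul_pos (by linarith) (mul_pos (by linarith) (by linarith))
  exact Real.sqrt_pos.mpr (div_pos (by linarith) hQ)



/-- bound 1/√(rt) with r,t ≥ 0 : equals r^(-1/2)*t^(-1/2) -/
lemma one_div_sqrt_mul {r t : ℝ} (hr : 0 ≤ r) (ht : 0 ≤ t) :
    1 / Real.sqrt (t * r) = r ^ (-(1/2) : ℝ) * t ^ (-(1/2) : ℝ) := by
  rw [Real.sqrt_eq_rpow, one_div, ← Real.rpow_neg (mul_nonneg ht hr),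
    Real.mul_rpow ht hr, mul_comm]

lemma integrable_FF (h12 : a1 < a2) : IntervalIntegrable (FF a1 a2) volume a1 a2 := by
  set c := (a1 + a2) / 2 with hc
  have hac : a1 < c := by simp only [hc]; linarith
  have hcb : c < a2 := by simp only [hc]; linarith
  have half1 : IntervalIntegrable (FF a1 a2) volume a1 c := by
    rw [intervalIntegrable_iff_integrableOn_Ioc_of_le hac.le]
    have i1 : IntervalIntegrable (fun x => (x - a1) ^ (-(1/2) : ℝ)) volume a1 c := by
      have := (intervalIntegrable_rpow' (a := 0) (b := c - a1)
        (r := -(1/2)) (by norm_num)).comp_sub_right a1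
      simpa using this
    have i1' : IntervalIntegrable
        (fun x => ((a2 - c) ^ (-(1/2) : ℝ)) * (x - a1) ^ (-(1/2) : ℝ)) volume a1 c :=
      i1.const_mul _
    rw [intervalIntegrable_iff_integrableOn_Ioc_of_le hac.le] at i1'
    apply i1'.mono' (measurable_FF.aestronglyMeasurable)
    rw [ae_restrict_iff' measurableSet_Ioc]
    filter_upwards with x hx
    obtain ⟨hx1, hx2⟩ := hx
    have h1 : (0:ℝ) < x - a1 := by linarith
    have h2 : (0:ℝ) < a2 - c := by linarith
    rw [Real.norm_eq_abs, abs_of_nonneg FF_nonneg, FF,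
      ← one_div_sqrt_mul h2.le h1.le]
    apply one_div_le_one_div_of_le (Real.sqrt_pos.mpr (by positivity))
    apply Real.sqrt_le_sqrt
    nlinarith
  have half2 : IntervalIntegrable (FF a1 a2) volume c a2 := by
    rw [intervalIntegrable_iff_integrableOn_Ioc_of_le hcb.le]
    have i1 : IntervalIntegrable (fun x => (a2 - x) ^ (-(1/2) : ℝ)) volume c a2 := by
      have := (intervalIntegrable_rpow' (a := a2 - c) (b := 0)
        (r := -(1/2)) (by norm_num)).comp_sub_left a2
      simpa using this
    have i1' : IntervalIntegrable
        (fun x => ((c - a1) ^ (-(1/2) : ℝ)) * (a2 - x) ^ (-(1/2) : ℝ)) volume c a2 :=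
      i1.const_mul _
    rw [intervalIntegrable_iff_integrableOn_Ioc_of_le hcb.le] at i1'
    apply i1'.mono' (measurable_FF.aestronglyMeasurable)
    rw [ae_restrict_iff' measurableSet_Ioc]
    filter_upwards with x hx
    obtain ⟨hx1, hx2⟩ := hx
    have h1 : (0:ℝ) ≤ a2 - x := by linarith
    have h2 : (0:ℝ) < c - a1 := by linarith
    rcases eq_or_lt_of_le h1 with h1' | h1'
    · have : x = a2 := by linarith
      subst this
      simp [FF, Real.norm_eq_abs, abs_of_nonneg FF_nonneg]
    · rw [Real.norm_eq_abs, abs_of_nonneg FF_nonneg, FF,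
        ← one_div_sqrt_mul h2.le h1]
      apply one_div_le_one_div_of_le (Real.sqrt_pos.mpr (by positivity))
      apply Real.sqrt_le_sqrt
      nlinarith
  exact half1.trans half2

lemma integral_FF (h12 : a1 < a2) : ∫ x in a1..a2, FF a1 a2 x = π := by
  have hd : (0:ℝ) < a2 - a1 := by linarith
  set G := fun x : ℝ => Real.arcsin ((2 * x - a1 - a2) / (a2 - a1)) with hG
  have hcont : ContinuousOn G (Icc a1 a2) := by
    apply Continuous.continuousOn
    exact Real.continuous_arcsin.comp
      (((continuous_const.mul continuous_id).sub continuous_const |>.sub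
        continuous_const).div_const _)
  have hderiv : ∀ x ∈ Ioo a1 a2, HasDerivAt G (FF a1 a2 x) x := by
    intro x hx
    obtain ⟨hx1, hx2⟩ := hx
    set u := (2 * x - a1 - a2) / (a2 - a1) with hu
    have hu1 : u < 1 := by rw [hu, div_lt_one hd]; linarith
    have hu2 : -1 < u := by rw [hu, lt_div_iff₀ hd]; linarith
    have hinner : HasDerivAt (fun y : ℝ => (2 * y - a1 - a2) / (a2 - a1))
        (2 / (a2 - a1)) x := by
      have h0 : HasDerivAt (fun y : ℝ => 2 * y - a1 - a2) 2 x := by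
        simpa using (((hasDerivAt_id x).const_mul (2:ℝ)).sub_const a1).sub_const a2
      simpa using h0.div_const (a2 - a1)
    have harc := (Real.hasDerivAt_arcsin (ne_of_gt hu2) (ne_of_lt hu1)).comp x hinner
    refine harc.congr_deriv (Eq.symm ?_)
    have hP : (0:ℝ) < (x - a1) * (a2 - x) := mul_pos (by linarith) (by linarith)
    have h4 : 1 - u ^ 2 = (2 / (a2 - a1)) ^ 2 * ((x - a1) * (a2 - x)) := by
      rw [hu]; field_simp; ring
    rw [FF, h4, Real.sqrt_mul (sq_nonneg _), Real.sqrt_sq (by positivity)]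
    rw [div_mul_eq_mul_div, one_mul]
    rw [eq_div_iff (by positivity)]
    field_simp
  have := integral_eq_sub_of_hasDerivAt_of_le h12.le hcont hderiv (integrable_FF h12)
  rw [this, hG]
  have e1 : (2 * a2 - a1 - a2) / (a2 - a1) = 1 := by
    rw [div_eq_one_iff_eq (ne_of_gt hd)]; ring
  have e2 : (2 * a1 - a1 - a2) / (a2 - a1) = -1 := by
    rw [div_eq_iff (ne_of_gt hd)]; ring
  simp only [e1, e2, Real.arcsin_one, Real.arcsin_neg_one]
  ring



lemma ff_a3_eq (h12 : a1 < a2) (h23 : a2 < a3) (hx1 : a1 < x) (hx2 : x < a2) :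
    ff a1 a2 a3 a3 x = FF a1 a2 x := by
  rw [ff_eq h23 hx1 hx2 (by linarith), FF]
  have h1 : (x - a1) * ((a2 - x) * (a3 - x)) ≠ 0 := by
    apply ne_of_gt; exact mul_pos (by linarith) (mul_pos (by linarith) (by linarith))
  have h2 : (x - a1) * (a2 - x) ≠ 0 := by
    apply ne_of_gt; exact mul_pos (by linarith) (by linarith)
  have key : (a3 - x) / ((x - a1) * ((a2 - x) * (a3 - x))) = 1 / ((x - a1) * (a2 - x)) := by
    rw [div_eq_div_iff h1 h2]; ring
  rw [key, one_div, Real.sqrt_inv, ← one_div]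

lemma intf (h12 : a1 < a2) (h23 : a2 < a3) (hν1 : a1 ≤ ν) (hν3 : ν ≤ a3) :
    IntervalIntegrable (ff a1 a2 a3 ν) volume a1 (min a2 ν) := by
  have hm1 : a1 ≤ min a2 ν := le_min h12.le hν1
  rw [intervalIntegrable_iff_integrableOn_Ioc_of_le hm1]
  have hFi : IntegrableOn (FF a1 a2) (Ioc a1 (min a2 ν)) volume :=
    (((intervalIntegrable_iff_integrableOn_Ioc_of_le h12.le).mp (integrable_FF h12)).mono_set
      (Ioc_subset_Ioc_right (min_le_left _ _)))
  apply Integrable.mono' hFi measurable_ff.aestronglyMeasurable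
  rw [ae_restrict_iff' measurableSet_Ioc]
  filter_upwards with y hy
  rw [Real.norm_eq_abs, abs_of_nonneg ff_nonneg]
  exact ff_le_FF h23 hy.1 (hy.2.trans (min_le_left _ _)) (hy.2.trans (min_le_right _ _)) hν3

end Stmt11Aux

open Stmt11Aux

/-- The map `θ(ν) = (1/π) ∫_{α₁}^{min(α₂,ν)} √|(ν−x)/A(x)| dx` is continuous and
strictly increasing on `[α₁, α₃]`, with `θ(α₁) = 0` and `θ(α₃) = 1`; in particular
every `θ₀ ∈ [0,1]` is attained at a unique `ν ∈ [α₁, α₃]`. -/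
theorem stmt_11 (a1 a2 a3 : ℝ) (h12 : a1 < a2) (h23 : a2 < a3)
    (θ : ℝ → ℝ)
    (hθ : ∀ ν : ℝ, θ ν = (1 / π) * ∫ x in a1..(min a2 ν),
        Real.sqrt |(ν - x) / ((x - a1) * (x - a2) * (x - a3))|) :
    ContinuousOn θ (Icc a1 a3) ∧ StrictMonoOn θ (Icc a1 a3) ∧
      θ a1 = 0 ∧ θ a3 = 1 ∧
      ∀ θ0 ∈ Icc (0 : ℝ) 1, ∃! ν, ν ∈ Icc a1 a3 ∧ θ ν = θ0 := by
  have hθ' : ∀ ν : ℝ, θ ν = (1 / π) * ∫ x in a1..(min a2 ν), ff a1 a2 a3 ν x := hθ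
  have hπ : (0:ℝ) < 1 / π := by positivity
  -- θ a1 = 0
  have hθ1 : θ a1 = 0 := by
    rw [hθ', min_eq_right h12.le, intervalIntegral.integral_same, mul_zero]
  -- θ a3 = 1
  have hθ3 : θ a3 = 1 := by
    rw [hθ', min_eq_left h23.le]
    have hne : ∀ᵐ y : ℝ ∂(volume : Measure ℝ), y ≠ a2 := by
      rw [ae_iff]
      simp only [not_not, setOf_eq_eq_singleton]
      exact Real.volume_singleton
    have hcongr : ∫ x in a1..a2, ff a1 a2 a3 a3 x = ∫ x in a1..a2, FF a1 a2 x := by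
      apply intervalIntegral.integral_congr_ae
      filter_upwards [hne] with y hyne hymem
      rw [uIoc_of_le h12.le] at hymem
      exact ff_a3_eq h12 h23 hymem.1 (lt_of_le_of_ne hymem.2 hyne)
    rw [hcongr, integral_FF h12, one_div, inv_mul_cancel₀ Real.pi_ne_zero]
  -- strict monotonicity
  have hmono : StrictMonoOn θ (Icc a1 a3) := by
    intro ν hν ν' hν' hlt
    have hm_le : min a2 ν ≤ min a2 ν' := min_le_min le_rfl hlt.le
    have hm1 : a1 ≤ min a2 ν := le_min h12.le hν.1
    have hm1' : a1 ≤ min a2 ν' := le_min h12.le hν'.1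
    have intν' : IntervalIntegrable (ff a1 a2 a3 ν') volume a1 (min a2 ν') :=
      intf h12 h23 hν'.1 hν'.2
    have hsub1 : uIcc a1 (min a2 ν) ⊆ uIcc a1 (min a2 ν') := by
      rw [uIcc_of_le hm1, uIcc_of_le hm1']
      exact Icc_subset_Icc_right hm_le
    have hsub2 : uIcc (min a2 ν) (min a2 ν') ⊆ uIcc a1 (min a2 ν') := by
      rw [uIcc_of_le hm_le, uIcc_of_le hm1']
      exact Icc_subset_Icc_left hm1
    have intν'₁ : IntervalIntegrable (ff a1 a2 a3 ν') volume a1 (min a2 ν) :=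
      intν'.mono_set hsub1
    have intν'₂ : IntervalIntegrable (ff a1 a2 a3 ν') volume (min a2 ν) (min a2 ν') :=
      intν'.mono_set hsub2
    have intν : IntervalIntegrable (ff a1 a2 a3 ν) volume a1 (min a2 ν) :=
      intf h12 h23 hν.1 hν.2
    have hsplit : ∫ x in a1..(min a2 ν'), ff a1 a2 a3 ν' x =
        (∫ x in a1..(min a2 ν), ff a1 a2 a3 ν' x) +
          ∫ x in (min a2 ν)..(min a2 ν'), ff a1 a2 a3 ν' x :=
      (intervalIntegral.integral_add_adjacent_intervals intν'₁ intν'₂).symm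
    have hsecond : 0 ≤ ∫ x in (min a2 ν)..(min a2 ν'), ff a1 a2 a3 ν' x :=
      intervalIntegral.integral_nonneg hm_le fun x _ => ff_nonneg
    rcases eq_or_lt_of_le hν.1 with rfl | hν1lt
    · -- ν = a1
      rw [hθ1, hθ' ν']
      have hm1lt : a1 < min a2 ν' := lt_min h12 hlt
      have hpos : 0 < ∫ x in a1..(min a2 ν'), ff a1 a2 a3 ν' x := by
        apply intervalIntegral_pos_of_pos_on intν' _ hm1lt
        intro x hx
        exact ff_pos h23 hx.1 (lt_of_lt_of_le hx.2 (min_le_left _ _))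
          (lt_of_lt_of_le hx.2 (min_le_right _ _))
      positivity
    · -- a1 < ν
      have hm1lt : a1 < min a2 ν := lt_min h12 hν1lt
      have hdiffpos : 0 < ∫ x in a1..(min a2 ν),
          (ff a1 a2 a3 ν' x - ff a1 a2 a3 ν x) := by
        apply intervalIntegral_pos_of_pos_on (intν'₁.sub intν) _ hm1lt
        intro x hx
        refine sub_pos.mpr (ff_lt_ff h23 hx.1 ?_ ?_ hlt)
        · exact lt_of_lt_of_le hx.2 (min_le_left _ _)
        · exact le_of_lt (lt_of_lt_of_le hx.2 (min_le_right _ _))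
      rw [intervalIntegral.integral_sub intν'₁ intν, sub_pos] at hdiffpos
      rw [hθ' ν, hθ' ν']
      apply mul_lt_mul_of_pos_left _ hπ
      calc ∫ x in a1..(min a2 ν), ff a1 a2 a3 ν x
          < ∫ x in a1..(min a2 ν), ff a1 a2 a3 ν' x := hdiffpos
        _ ≤ _ := by rw [hsplit]; linarith
  -- continuity
  have hcont : ContinuousOn θ (Icc a1 a3) := by
    intro ν0 hν0
    set g : ℝ → ℝ → ℝ := fun ν => (Ioc a1 (min a2 ν)).indicator (ff a1 a2 a3 ν) with hg
    have hrepr : ∀ ν ∈ Icc a1 a3, θ ν = (1 / π) * ∫ x in Ioc a1 a2, g ν x := by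
      intro ν hν
      rw [hθ' ν, intervalIntegral.integral_of_le (le_min h12.le hν.1), hg]
      congr 1
      rw [setIntegral_indicator measurableSet_Ioc,
        inter_eq_right.mpr (Ioc_subset_Ioc_right (min_le_left _ _))]
    have hFint : IntegrableOn (FF a1 a2) (Ioc a1 a2) volume :=
      (intervalIntegrable_iff_integrableOn_Ioc_of_le h12.le).mp (integrable_FF h12)
    have hmin_t : Tendsto (fun ν : ℝ => min a2 ν) (𝓝[Icc a1 a3] ν0) (𝓝 (min a2 ν0)) :=
      ((continuous_const.min continuous_id).tendsto ν0).mono_left nhdsWithin_le_nhds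
    have htend : Tendsto (fun ν => ∫ x in Ioc a1 a2, g ν x)
        (𝓝[Icc a1 a3] ν0) (𝓝 (∫ x in Ioc a1 a2, g ν0 x)) := by
      apply MeasureTheory.tendsto_integral_filter_of_dominated_convergence (FF a1 a2)
      · exact Eventually.of_forall fun ν =>
          (measurable_ff.indicator measurableSet_Ioc).aestronglyMeasurable
      · filter_upwards [self_mem_nhdsWithin] with ν hν
        rw [ae_restrict_iff' measurableSet_Ioc]
        filter_upwards with x hx
        by_cases hxm : x ∈ Ioc a1 (min a2 ν)
        · rw [hg]; simp only [indicator_of_mem hxm]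
          rw [Real.norm_eq_abs, abs_of_nonneg ff_nonneg]
          exact ff_le_FF h23 hxm.1 (hxm.2.trans (min_le_left _ _))
            (hxm.2.trans (min_le_right _ _)) hν.2
        · rw [hg]; simp only [indicator_of_notMem hxm]
          simpa using (FF_nonneg (a1 := a1) (a2 := a2) (x := x))
      · exact hFint
      · have hne : ∀ᵐ y : ℝ ∂(volume : Measure ℝ), y ≠ min a2 ν0 := by
          rw [ae_iff]
          simp only [not_not, setOf_eq_eq_singleton]
          exact Real.volume_singleton
        filter_upwards [ae_restrict_of_ae hne, ae_restrict_mem measurableSet_Ioc]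
          with x hxne hxmem
        obtain ⟨hx1, _⟩ := hxmem
        rcases lt_or_gt_of_ne hxne with hxlt | hxgt
        · have hev : ∀ᶠ ν in 𝓝[Icc a1 a3] ν0, x < min a2 ν :=
            hmin_t.eventually (eventually_gt_nhds hxlt)
          have hfx : Tendsto (fun ν => ff a1 a2 a3 ν x) (𝓝[Icc a1 a3] ν0)
              (𝓝 (ff a1 a2 a3 ν0 x)) := by
            have hc : Continuous fun ν : ℝ => ff a1 a2 a3 ν x :=
              (((continuous_id.sub continuous_const).div_const _).abs).sqrt
            exact (hc.tendsto ν0).mono_left nhdsWithin_le_nhds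
          have hmem0 : x ∈ Ioc a1 (min a2 ν0) := ⟨hx1, hxlt.le⟩
          rw [hg]; simp only [indicator_of_mem hmem0]
          apply hfx.congr'
          filter_upwards [hev] with ν hν
          have hxmem' : x ∈ Ioc a1 (min a2 ν) := ⟨hx1, hν.le⟩
          show ff a1 a2 a3 ν x = (Ioc a1 (min a2 ν)).indicator (ff a1 a2 a3 ν) x
          rw [Set.indicator_of_mem hxmem']
        · have hev : ∀ᶠ ν in 𝓝[Icc a1 a3] ν0, min a2 ν < x :=
            hmin_t.eventually (eventually_lt_nhds hxgt)
          have hmem0 : x ∉ Ioc a1 (min a2 ν0) := fun h => absurd h.2 (not_le.mpr hxgt)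
          rw [hg]; simp only [indicator_of_notMem hmem0]
          apply tendsto_const_nhds.congr'
          filter_upwards [hev] with ν hν
          have hnm : x ∉ Ioc a1 (min a2 ν) := fun h => absurd h.2 (not_le.mpr hν)
          show (0:ℝ) = (Ioc a1 (min a2 ν)).indicator (ff a1 a2 a3 ν) x
          rw [Set.indicator_of_notMem hnm]
    have : ContinuousWithinAt θ (Icc a1 a3) ν0 := by
      unfold ContinuousWithinAt
      rw [hrepr ν0 hν0]
      apply Tendsto.congr' _ (htend.const_mul (1 / π))
      filter_upwards [self_mem_nhdsWithin] with ν hν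
      exact (hrepr ν hν).symm
    exact this
  refine ⟨hcont, hmono, hθ1, hθ3, ?_⟩
  intro θ0 hθ0
  have h13 : a1 ≤ a3 := le_trans h12.le h23.le
  have hmem : θ0 ∈ Icc (θ a1) (θ a3) := by rw [hθ1, hθ3]; exact hθ0
  obtain ⟨ν, hν, hθν⟩ := intermediate_value_Icc h13 hcont hmem
  refine ⟨ν, ⟨hν, hθν⟩, ?_⟩
  rintro ν' ⟨hν', hθν'⟩
  exact hmono.injOn hν' hν (hθν'.trans hθν.symm)
end

section
/- Let f be a degree-k polynomial and g a degree-(k+1) polynomial, both with all zeros simple and contained in (α_1,α_2) ∪ (α_2,α_3), such that: g has exactly j−1 zeros in (α_1,α_2) and f has exactly j−1 zeros in (α_1,α_2); between any two consecutive zeros of g in (α_1,α_2) there is a zero of f, and between the largest zero of g in (α_1,α_2) and α_2 there is a zero of f; between any two consecutive zeros of f in (α_1,α_2) (restricted below some point) there is a zero of g and between α_1 and the smallest zero of f there is a zero of g; and between any two consecutive zeros of f in (α_2,α_3) and between each extreme zero of f in (α_2,α_3) and the endpoints α_2, α_3 there is a zero of g. Then the zeros of f and g strictly interlace: y_1 <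 x_1 < y_2 < … < x_k < y_{k+1}, where x_i are the zeros of f and y_i of g in increasing order. -/
open Polynomial Set

lemma seg_aux {n m : ℕ} (S : Finset (Fin n))
    (hdc : ∀ i ∈ S, ∀ l : Fin n, l ≤ i → l ∈ S) (hcard : S.card = m) :
    ∀ i : Fin n, i ∈ S ↔ (i : ℕ) < m := by
  intro i
  constructor
  · intro hi
    have h1 : Finset.Iic i ⊆ S := fun l hl => hdc i hi l (Finset.mem_Iic.mp hl)
    have h2 := Finset.card_le_card h1
    rw [hcard, Fin.card_Iic] at h2
    omega
  · intro hi
    by_contra hns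
    have h1 : S ⊆ Finset.Iio i := by
      intro l hl
      rw [Finset.mem_Iio]
      by_contra h
      exact hns (hdc l hl i (not_lt.mp h))
    have h2 := Finset.card_le_card h1
    rw [hcard, Fin.card_Iio] at h2
    omega

lemma loc_iff {n m : ℕ} (a1 a2 a3 : ℝ) (z : Fin n → ℝ) (hz : StrictMono z)
    (hloc : ∀ i, z i ∈ Ioo a1 a2 ∪ Ioo a2 a3)
    (hc : (Finset.univ.filter (fun i => z i ∈ Ioo a1 a2)).card = m) :
    ∀ i : Fin n, (z i ∈ Ioo a1 a2 ↔ (i : ℕ) < m) ∧ (z i ∈ Ioo a2 a3 ↔ m ≤ (i : ℕ)) := by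
  have key := seg_aux (Finset.univ.filter (fun i => z i ∈ Ioo a1 a2)) ?_ hc
  · intro i
    have k1 : z i ∈ Ioo a1 a2 ↔ (i : ℕ) < m := by
      simpa using key i
    refine ⟨k1, ?_⟩
    constructor
    · intro h
      by_contra hlt
      have := k1.mpr (by omega)
      exact absurd this.2 (not_lt.mpr h.1.le)
    · intro h
      rcases hloc i with hl | hr
      · exact absurd (k1.mp hl) (by omega)
      · exact hr
  · intro i hi l hl
    simp only [Finset.mem_filter, Finset.mem_univ, true_and] at hi ⊢
    have hle : z l ≤ z i := hz.monotone hl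
    rcases hloc l with h | h
    · exact h
    · exact absurd h.1 (not_lt.mpr (hle.trans hi.2.le))


/-- Zero-counting step for Theorem 3: if `f` (degree `k`) and `g` (degree `k+1`) both
have `j−1` simple zeros in `(α₁,α₂)` and the remaining zeros in `(α₂,α₃)`, with the
stated separation properties, then their zeros strictly interlace:
`y₁ < x₁ < y₂ < ⋯ < x_k < y_{k+1}`. -/
theorem stmt_16 (a1 a2 a3 : ℝ) (h12 : a1 < a2) (h23 : a2 < a3)
    (k j : ℕ) (hj : 1 ≤ j) (hjk : j ≤ k + 1)
    (f g : Polynomial ℝ) (hfd : f.natDegree = k) (hgd : g.natDegree = k + 1)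
    (x : Fin k → ℝ) (y : Fin (k + 1) → ℝ) (hx : StrictMono x) (hy : StrictMono y)
    (hxz : ∀ i, f.eval (x i) = 0) (hxall : ∀ t : ℝ, f.eval t = 0 → ∃ i, t = x i)
    (hyz : ∀ i, g.eval (y i) = 0) (hyall : ∀ t : ℝ, g.eval t = 0 → ∃ i, t = y i)
    (hxloc : ∀ i, x i ∈ Ioo a1 a2 ∪ Ioo a2 a3)
    (hyloc : ∀ i, y i ∈ Ioo a1 a2 ∪ Ioo a2 a3)
    -- zero counts in (α₁,α₂): j−1 for each of f and g
    (hcx : (Finset.univ.filter (fun i => x i ∈ Ioo a1 a2)).card = j - 1)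
    (hcy : (Finset.univ.filter (fun i => y i ∈ Ioo a1 a2)).card = j - 1)
    -- between consecutive zeros of g in (α₁,α₂) there is a zero of f
    (hg_consec_left : ∀ u v : ℝ, g.eval u = 0 → g.eval v = 0 → u ∈ Ioo a1 a2 →
      v ∈ Ioo a1 a2 → u < v → (∀ t ∈ Ioo u v, g.eval t ≠ 0) →
      ∃ w ∈ Ioo u v, f.eval w = 0)
    -- between the largest zero of g in (α₁,α₂) and α₂ there is a zero of f
    (hg_top_left : ∀ u : ℝ, g.eval u = 0 → u ∈ Ioo a1 a2 →
      (∀ t : ℝ, g.eval t = 0 → t ∈ Ioo a1 a2 → t ≤ u) →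
      ∃ w ∈ Ioo u a2, f.eval w = 0)
    -- between consecutive zeros of f in (α₁,α₂) there is a zero of g
    (hf_consec_left : ∀ u v : ℝ, f.eval u = 0 → f.eval v = 0 → u ∈ Ioo a1 a2 →
      v ∈ Ioo a1 a2 → u < v → (∀ t ∈ Ioo u v, f.eval t ≠ 0) →
      ∃ w ∈ Ioo u v, g.eval w = 0)
    -- between α₁ and the smallest zero of f in (α₁,α₂) there is a zero of g
    (hf_bot_left : ∀ u : ℝ, f.eval u = 0 → u ∈ Ioo a1 a2 →
      (∀ t : ℝ, f.eval t = 0 → t ∈ Ioo a1 a2 → u ≤ t) →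
      ∃ w ∈ Ioo a1 u, g.eval w = 0)
    -- between consecutive zeros of f in (α₂,α₃) there is a zero of g
    (hf_consec_right : ∀ u v : ℝ, f.eval u = 0 → f.eval v = 0 → u ∈ Ioo a2 a3 →
      v ∈ Ioo a2 a3 → u < v → (∀ t ∈ Ioo u v, f.eval t ≠ 0) →
      ∃ w ∈ Ioo u v, g.eval w = 0)
    -- between α₂ and the smallest zero of f in (α₂,α₃) there is a zero of g
    (hf_bot_right : ∀ u : ℝ, f.eval u = 0 → u ∈ Ioo a2 a3 →
      (∀ t : ℝ, f.eval t = 0 → t ∈ Ioo a2 a3 → u ≤ t) →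
      ∃ w ∈ Ioo a2 u, g.eval w = 0)
    -- between the largest zero of f in (α₂,α₃) and α₃ there is a zero of g
    (hf_top_right : ∀ u : ℝ, f.eval u = 0 → u ∈ Ioo a2 a3 →
      (∀ t : ℝ, f.eval t = 0 → t ∈ Ioo a2 a3 → t ≤ u) →
      ∃ w ∈ Ioo u a3, g.eval w = 0) :
    ∀ i : Fin k, y i.castSucc < x i ∧ x i < y i.succ := by
  set m := j - 1 with hm
  have hmk : m ≤ k := by omega
  have hX := loc_iff a1 a2 a3 x hx hxloc hcx
  have hY := loc_iff a1 a2 a3 y hy hyloc hcy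
  -- gap lemmas
  have hfgap : ∀ (p : ℕ) (hp : p + 1 < k),
      ∀ t ∈ Ioo (x ⟨p, by omega⟩) (x ⟨p + 1, hp⟩), f.eval t ≠ 0 := by
    intro p hp t ht h0
    obtain ⟨l, rfl⟩ := hxall t h0
    have h1 : (p : ℕ) < l.val := hx.lt_iff_lt.mp ht.1
    have h2 : l.val < p + 1 := hx.lt_iff_lt.mp ht.2
    omega
  have hggap : ∀ (p : ℕ) (hp : p + 1 < k + 1),
      ∀ t ∈ Ioo (y ⟨p, by omega⟩) (y ⟨p + 1, hp⟩), g.eval t ≠ 0 := by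
    intro p hp t ht h0
    obtain ⟨l, rfl⟩ := hyall t h0
    have h1 : (p : ℕ) < l.val := hy.lt_iff_lt.mp ht.1
    have h2 : l.val < p + 1 := hy.lt_iff_lt.mp ht.2
    omega
  -- left base : y_{m-1} < x_{m-1}
  have Lbase : ∀ (h1 : 1 ≤ m), y ⟨m - 1, by omega⟩ < x ⟨m - 1, by omega⟩ := by
    intro h1
    have hu : y ⟨m - 1, by omega⟩ ∈ Ioo a1 a2 := (hY _).1.mpr (by simp only [Fin.val_mk]; omega)
    have hside : ∀ t : ℝ, g.eval t = 0 → t ∈ Ioo a1 a2 → t ≤ y ⟨m - 1, by omega⟩ := by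
      intro t ht htm
      obtain ⟨l, rfl⟩ := hyall t ht
      have : l.val < m := (hY l).1.mp htm
      exact hy.monotone (by simp only [Fin.le_def, Fin.val_mk]; omega)
    obtain ⟨w, hw, hwf⟩ := hg_top_left (y ⟨m - 1, by omega⟩) (hyz _) hu hside
    obtain ⟨l, rfl⟩ := hxall w hwf
    have hl : x l ∈ Ioo a1 a2 := ⟨hu.1.trans hw.1, hw.2⟩
    have : l.val < m := (hX l).1.mp hl
    have : x l ≤ x ⟨m - 1, by omega⟩ := hx.monotone (by simp only [Fin.le_def, Fin.val_mk]; omega)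
    linarith [hw.1]
  -- left step
  have Lstep : ∀ (p : ℕ) (hp : p + 1 < m),
      y ⟨p + 1, by omega⟩ < x ⟨p + 1, by omega⟩ →
      y ⟨p, by omega⟩ < x ⟨p, by omega⟩ := by
    intro p hp hnext
    obtain ⟨w, hw, hwf⟩ := hg_consec_left (y ⟨p, by omega⟩) (y ⟨p + 1, by omega⟩)
      (hyz _) (hyz _) ((hY _).1.mpr (by simp only [Fin.val_mk]; omega)) ((hY _).1.mpr (by simp only [Fin.val_mk]; omega))
      (hy (by simp only [Fin.lt_def, Fin.val_mk]; omega)) (hggap p (by omega))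
    obtain ⟨l, rfl⟩ := hxall w hwf
    have hlt : x l < x ⟨p + 1, by omega⟩ := lt_trans hw.2 hnext
    have : l.val < p + 1 := hx.lt_iff_lt.mp hlt
    have hle : x l ≤ x ⟨p, by omega⟩ := hx.monotone (by simp only [Fin.le_def, Fin.val_mk]; omega)
    linarith [hw.1]
  -- left lower bounds
  have L : ∀ (p : ℕ) (hp : p < m), y ⟨p, by omega⟩ < x ⟨p, by omega⟩ := by
    have : ∀ (d p : ℕ) (hp : p < m), m ≤ p + d + 1 → y ⟨p, by omega⟩ < x ⟨p, by omega⟩ := by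
      intro d
      induction d with
      | zero =>
        intro p hp hle
        have hpe : p = m - 1 := by omega
        subst hpe
        exact Lbase (by omega)
      | succ d ih =>
        intro p hp hle
        by_cases hc : p + 1 = m
        · have hpe : p = m - 1 := by omega
          subst hpe
          exact Lbase (by omega)
        · exact Lstep p (by omega) (ih (p + 1) (by omega) (by omega))
    intro p hp
    exact this (m - p) p hp (by omega)
  -- left upper bounds : x_p < y_{p+1} for p < m
  have U : ∀ (p : ℕ) (hp : p < m), x ⟨p, by omega⟩ < y ⟨p + 1, by omega⟩ := by
    have Ubase : ∀ (h1 : 1 ≤ m), x ⟨m - 1, by omega⟩ < y ⟨m - 1 + 1, by omega⟩ := by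
      intro h1
      have hxm : x ⟨m - 1, by omega⟩ ∈ Ioo a1 a2 := (hX _).1.mpr (by simp only [Fin.val_mk]; omega)
      have hym : y ⟨m - 1 + 1, by omega⟩ ∈ Ioo a2 a3 := (hY _).2.mpr (by simp only [Fin.val_mk]; omega)
      linarith [hxm.2, hym.1]
    have Ustep : ∀ (p : ℕ) (hp : p + 1 < m),
        x ⟨p + 1, by omega⟩ < y ⟨p + 1 + 1, by omega⟩ →
        x ⟨p, by omega⟩ < y ⟨p + 1, by omega⟩ := by
      intro p hp hnext
      obtain ⟨w, hw, hwg⟩ := hf_consec_left (x ⟨p, by omega⟩) (x ⟨p + 1, by omega⟩)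
        (hxz _) (hxz _) ((hX _).1.mpr (by simp only [Fin.val_mk]; omega)) ((hX _).1.mpr (by simp only [Fin.val_mk]; omega))
        (hx (by simp only [Fin.lt_def, Fin.val_mk]; omega)) (hfgap p (by omega))
      obtain ⟨l, rfl⟩ := hyall w hwg
      have h1 : p + 1 ≤ l.val := by
        by_contra hcon
        have : y l ≤ y ⟨p, by omega⟩ := hy.monotone (by simp only [Fin.le_def, Fin.val_mk]; omega)
        linarith [L p (by omega), hw.1]
      have h2 : l.val < p + 2 := hy.lt_iff_lt.mp (lt_trans hw.2 hnext)
      have hle : y l ≤ y ⟨p + 1, by omega⟩ := hy.monotone (by simp only [Fin.le_def, Fin.val_mk]; omega)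
      linarith [hw.1]
    have key : ∀ (d p : ℕ) (hp : p < m), m ≤ p + d + 1 →
        x ⟨p, by omega⟩ < y ⟨p + 1, by omega⟩ := by
      intro d
      induction d with
      | zero =>
        intro p hp hle
        have hpe : p = m - 1 := by omega
        subst hpe
        exact Ubase (by omega)
      | succ d ih =>
        intro p hp hle
        by_cases hc : p + 1 = m
        · have hpe : p = m - 1 := by omega
          subst hpe
          exact Ubase (by omega)
        · exact Ustep p (by omega) (ih (p + 1) (by omega) (by omega))
    intro p hp
    exact key (m - p) p hp (by omega)
  -- right lower bounds : y_p < x_p for m ≤ p < k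
  have R1 : ∀ (p : ℕ), m ≤ p → (hp : p < k) → y ⟨p, by omega⟩ < x ⟨p, hp⟩ := by
    intro p hp
    induction p, hp using Nat.le_induction with
    | base =>
      intro hmklt
      have hu : x ⟨m, hmklt⟩ ∈ Ioo a2 a3 := (hX _).2.mpr (by simp only [Fin.val_mk]; omega)
      have hside : ∀ t : ℝ, f.eval t = 0 → t ∈ Ioo a2 a3 → x ⟨m, hmklt⟩ ≤ t := by
        intro t ht htm
        obtain ⟨l, rfl⟩ := hxall t ht
        have : m ≤ l.val := (hX l).2.mp htm
        exact hx.monotone (by simp only [Fin.le_def, Fin.val_mk]; omega)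
      obtain ⟨w, hw, hwg⟩ := hf_bot_right (x ⟨m, hmklt⟩) (hxz _) hu hside
      obtain ⟨l, rfl⟩ := hyall w hwg
      have hl : y l ∈ Ioo a2 a3 := ⟨hw.1, lt_trans hw.2 hu.2⟩
      have : m ≤ l.val := (hY l).2.mp hl
      have : y ⟨m, by omega⟩ ≤ y l := hy.monotone (by simp only [Fin.le_def, Fin.val_mk]; omega)
      linarith [hw.2]
    | succ p hmp ih =>
      intro hpk
      have hprev := ih (by omega)
      obtain ⟨w, hw, hwg⟩ := hf_consec_right (x ⟨p, by omega⟩) (x ⟨p + 1, hpk⟩)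
        (hxz _) (hxz _) ((hX _).2.mpr (by simp only [Fin.val_mk]; omega)) ((hX _).2.mpr (by simp only [Fin.val_mk]; omega))
        (hx (by simp only [Fin.lt_def, Fin.val_mk]; omega)) (hfgap p (by omega))
      obtain ⟨l, rfl⟩ := hyall w hwg
      have h1 : p + 1 ≤ l.val := by
        by_contra hcon
        have : y l ≤ y ⟨p, by omega⟩ := hy.monotone (by simp only [Fin.le_def, Fin.val_mk]; omega)
        linarith [hw.1]
      have hle : y ⟨p + 1, by omega⟩ ≤ y l := hy.monotone (by simp only [Fin.le_def, Fin.val_mk]; omega)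
      linarith [hw.2]
  -- right upper bounds : x_p < y_{p+1} for m ≤ p < k
  have R2 : ∀ (p : ℕ), m ≤ p → (hp : p < k) → x ⟨p, hp⟩ < y ⟨p + 1, by omega⟩ := by
    have Rbase : ∀ (h1 : k ≠ 0) (h2 : m ≤ k - 1),
        x ⟨k - 1, by omega⟩ < y ⟨k - 1 + 1, by omega⟩ := by
      intro h1 h2
      have hu : x ⟨k - 1, by omega⟩ ∈ Ioo a2 a3 := (hX _).2.mpr (by simp only [Fin.val_mk]; omega)
      have hside : ∀ t : ℝ, f.eval t = 0 → t ∈ Ioo a2 a3 → t ≤ x ⟨k - 1, by omega⟩ := by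
        intro t ht htm
        obtain ⟨l, rfl⟩ := hxall t ht
        exact hx.monotone (by simp only [Fin.le_def, Fin.val_mk]; omega)
      obtain ⟨w, hw, hwg⟩ := hf_top_right (x ⟨k - 1, by omega⟩) (hxz _) hu hside
      obtain ⟨l, rfl⟩ := hyall w hwg
      have : y l ≤ y ⟨k - 1 + 1, by omega⟩ := hy.monotone (by simp only [Fin.le_def, Fin.val_mk]; omega)
      linarith [hw.1]
    have Rstep : ∀ (p : ℕ), m ≤ p → (hp : p + 1 < k) →
        x ⟨p + 1, hp⟩ < y ⟨p + 1 + 1, by omega⟩ →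
        x ⟨p, by omega⟩ < y ⟨p + 1, by omega⟩ := by
      intro p hmp hp hnext
      obtain ⟨w, hw, hwg⟩ := hf_consec_right (x ⟨p, by omega⟩) (x ⟨p + 1, hp⟩)
        (hxz _) (hxz _) ((hX _).2.mpr (by simp only [Fin.val_mk]; omega)) ((hX _).2.mpr (by simp only [Fin.val_mk]; omega))
        (hx (by simp only [Fin.lt_def, Fin.val_mk]; omega)) (hfgap p (by omega))
      obtain ⟨l, rfl⟩ := hyall w hwg
      have h1 : p + 1 ≤ l.val := by
        by_contra hcon
        have hc1 : y l ≤ y ⟨p, by omega⟩ := hy.monotone (by simp only [Fin.le_def, Fin.val_mk]; omega)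
        linarith [R1 p hmp (by omega), hw.1]
      have h2 : l.val < p + 2 := hy.lt_iff_lt.mp (lt_trans hw.2 hnext)
      have hle : y l ≤ y ⟨p + 1, by omega⟩ := hy.monotone (by simp only [Fin.le_def, Fin.val_mk]; omega)
      linarith [hw.1]
    have key : ∀ (d p : ℕ), m ≤ p → (hp : p < k) → k ≤ p + d + 1 →
        x ⟨p, hp⟩ < y ⟨p + 1, by omega⟩ := by
      intro d
      induction d with
      | zero =>
        intro p hmp hp hle
        have hpe : p = k - 1 := by omega
        subst hpe
        exact Rbase (by omega) (by omega)
      | succ d ih =>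
        intro p hmp hp hle
        by_cases hc : p + 1 = k
        · have hpe : p = k - 1 := by omega
          subst hpe
          exact Rbase (by omega) (by omega)
        · exact Rstep p hmp (by omega) (ih (p + 1) (by omega) (by omega) (by omega))
    intro p hmp hp
    exact key (k - p) p hmp hp (by omega)
  -- conclude
  intro i
  have hcs : i.castSucc = (⟨i.val, by omega⟩ : Fin (k + 1)) := by
    apply Fin.ext; simp
  have hsc : i.succ = (⟨i.val + 1, by omega⟩ : Fin (k + 1)) := by
    apply Fin.ext; simp
  have hi2 : i = (⟨i.val, i.isLt⟩ : Fin k) := by apply Fin.ext; rfl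
  rw [hcs, hsc, hi2]
  by_cases hc : i.val < m
  · exact ⟨L i.val hc, U i.val hc⟩
  · exact ⟨R1 i.val (by omega) i.isLt, R2 i.val (by omega) i.isLt⟩
end
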